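/- arXiv:2204.11694 — 13 statements merged into one kernel-verified Lean document; each statement's English description precedes it below -/
import Mathlib

section
/- If μ is a finitely additive probability measure on ω (i.e. on the power set of ω) that vanishes on points (μ({n}) = 0 for all n), then for every infinite set A ⊆ ω there exists an infinite subset B ⊆ A with μ(B) = 0. -/
private lemma stmt0_split (S : Set ℕ) (hS : S.Infinite) :
    ∃ T ⊆ S, T.Infinite ∧ (S \ T).Infinite := by
  classical
  set e := hS.natEmbedding S with he
  set f : ℕ → ℕ := fun n => (e n : ℕ) with hf
  have hfinj : Function.Injective f := fun a b h => e.injective (Subtype.ext h)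
  have hfS : ∀ n, f n ∈ S := fun n => (e n).2
  refine ⟨Set.range (fun n => f (2 * n)), ?_, ?_, ?_⟩
  · rintro x ⟨n, rfl⟩; exact hfS _
  · exact Set.infinite_range_of_injective (fun a b h => by
      have := hfinj h; omega)
  · apply Set.Infinite.mono (s := Set.range (fun n => f (2 * n + 1)))
    · rintro x ⟨n, rfl⟩
      refine ⟨hfS _, ?_⟩
      rintro ⟨m, hm⟩
      have := hfinj hm; omega
    · exact Set.infinite_range_of_injective (fun a b h => by
        have := hfinj h; omega)

theorem stmt0 (μ : Set ℕ → ℝ)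
    (hadd : ∀ A B : Set ℕ, Disjoint A B → μ (A ∪ B) = μ A + μ B)
    (hnonneg : ∀ A : Set ℕ, 0 ≤ μ A)
    (hprob : μ Set.univ = 1)
    (hpoints : ∀ n : ℕ, μ {n} = 0) :
    ∀ A : Set ℕ, A.Infinite → ∃ B ⊆ A, B.Infinite ∧ μ B = 0 := by
  classical
  -- basic facts
  have hempty : μ ∅ = 0 := by
    have := hadd ∅ ∅ (disjoint_bot_left)
    simp at this; linarith
  have hmono : ∀ X Y : Set ℕ, X ⊆ Y → μ X ≤ μ Y := by
    intro X Y hXY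
    have hd : Disjoint X (Y \ X) := Set.disjoint_sdiff_right.mono_left le_rfl
    have := hadd X (Y \ X) hd
    rw [Set.union_diff_cancel hXY] at this
    have := hnonneg (Y \ X); linarith
  have hsubadd : ∀ X Y : Set ℕ, μ (X ∪ Y) ≤ μ X + μ Y := by
    intro X Y
    have hd : Disjoint X (Y \ X) := Set.disjoint_sdiff_right
    have h1 : X ∪ Y = X ∪ (Y \ X) := by rw [Set.union_diff_self]
    rw [h1, hadd X (Y \ X) hd]
    have := hmono (Y \ X) Y Set.diff_subset
    linarith
  have hfinset : ∀ s : Finset ℕ, μ ↑s = 0 := by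
    intro s
    induction s using Finset.induction_on with
    | empty => simpa using hempty
    | insert a s ha ih =>
      have hd : Disjoint ({a} : Set ℕ) (↑s : Set ℕ) := by simpa using ha
      have : μ (insert a (↑s : Set ℕ)) = μ ({a} : Set ℕ) + μ ↑s := by
        rw [← Set.singleton_union]; exact hadd _ _ hd
      rw [Finset.coe_insert, this, ih, hpoints]; ring
  have hfin : ∀ X : Set ℕ, X.Finite → μ X = 0 := by
    intro X hX
    have := hfinset hX.toFinset
    rwa [Set.Finite.coe_toFinset] at this
  -- halving step
  have step : ∀ S : Set ℕ, S.Infinite → ∃ T, T ⊆ S ∧ T.Infinite ∧ μ T ≤ μ S / 2 := by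
    intro S hS
    obtain ⟨T, hTS, hTinf, hSTinf⟩ := stmt0_split S hS
    have hsum : μ T + μ (S \ T) = μ S := by
      have := hadd T (S \ T) Set.disjoint_sdiff_right
      rw [Set.union_diff_cancel hTS] at this; linarith
    by_cases h : μ T ≤ μ S / 2
    · exact ⟨T, hTS, hTinf, h⟩
    · exact ⟨S \ T, Set.diff_subset, hSTinf, by linarith⟩
  intro A hA
  choose F hFsub hFinf hFle using step
  -- the decreasing sequence
  let seq : ℕ → {S : Set ℕ // S.Infinite} := fun n =>
    Nat.rec ⟨A, hA⟩ (fun _ p => ⟨F p.1 p.2, hFinf p.1 p.2⟩) n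
  have hseq0 : (seq 0).1 = A := rfl
  have hseqsub : ∀ n, (seq (n + 1)).1 ⊆ (seq n).1 := fun n => hFsub _ _
  have hseqchain : ∀ m n, m ≤ n → (seq n).1 ⊆ (seq m).1 := by
    intro m n hmn
    induction n with
    | zero => simp_all
    | succ k ih =>
      rcases Nat.lt_or_ge m (k + 1) with h | h
      · exact (hseqsub k).trans (ih (by omega))
      · have : m = k + 1 := by omega
        subst this; exact subset_rfl
  have hseqA : ∀ n, (seq n).1 ⊆ A := fun n => hseqchain 0 n (Nat.zero_le n)
  have hseqle : ∀ n, μ (seq n).1 ≤ (1 / 2 : ℝ) ^ n := by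
    intro n
    induction n with
    | zero =>
      simpa [hseq0] using (hmono A Set.univ (Set.subset_univ A)).trans_eq hprob
    | succ k ih =>
      have h1 : μ (seq (k + 1)).1 ≤ μ (seq k).1 / 2 := hFle _ _
      calc μ (seq (k + 1)).1 ≤ μ (seq k).1 / 2 := h1
        _ ≤ (1 / 2 : ℝ) ^ k / 2 := by linarith
        _ = (1 / 2 : ℝ) ^ (k + 1) := by ring
  -- pick b n ∈ seq n with b n > n
  have hb : ∀ n, ∃ m ∈ (seq n).1, n < m := fun n => (seq n).2.exists_gt n
  choose b hbmem hbgt using hb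
  refine ⟨Set.range b, ?_, ?_, ?_⟩
  · rintro x ⟨n, rfl⟩; exact hseqA n (hbmem n)
  · apply Set.infinite_of_not_bddAbove
    rintro ⟨u, hu⟩
    have := hu ⟨u, rfl⟩
    have := hbgt u
    omega
  · refine le_antisymm ?_ (hnonneg _)
    have key : ∀ n, μ (Set.range b) ≤ (1 / 2 : ℝ) ^ n := by
      intro n
      have hsub : Set.range b ⊆ (b '' Set.Iio n) ∪ (seq n).1 := by
        rintro x ⟨k, rfl⟩
        rcases Nat.lt_or_ge k n with h | h
        · exact Or.inl ⟨k, h, rfl⟩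
        · exact Or.inr (hseqchain n k h (hbmem k))
      calc μ (Set.range b) ≤ μ ((b '' Set.Iio n) ∪ (seq n).1) := hmono _ _ hsub
        _ ≤ μ (b '' Set.Iio n) + μ (seq n).1 := hsubadd _ _
        _ = μ (seq n).1 := by
            rw [hfin _ ((Set.finite_Iio n).image b)]; ring
        _ ≤ (1 / 2 : ℝ) ^ n := hseqle n
    have htend : Filter.Tendsto (fun n => (1 / 2 : ℝ) ^ n) Filter.atTop (nhds 0) :=
      tendsto_pow_atTop_nhds_zero_of_lt_one (by norm_num) (by norm_num)
    exact ge_of_tendsto' htend key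
end

section
/- There is no finitely additive probability measure μ on the power set of ω such that μ vanishes on all finite sets and μ(A) > 0 for every infinite A ⊆ ω. -/
theorem stmt1 :
    ¬ ∃ μ : Set ℕ → ℝ,
      (∀ A B : Set ℕ, Disjoint A B → μ (A ∪ B) = μ A + μ B) ∧
      (∀ A : Set ℕ, 0 ≤ μ A) ∧
      μ Set.univ = 1 ∧
      (∀ A : Set ℕ, A.Finite → μ A = 0) ∧
      (∀ A : Set ℕ, A.Infinite → 0 < μ A) := by
  rintro ⟨μ, hadd, hpos, huniv, hfin, hinf⟩
  -- measure of a set equals measure of subset plus measure of difference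
  have hsplit : ∀ {B C : Set ℕ}, B ⊆ C → μ C = μ B + μ (C \ B) := by
    intro B C h
    rw [← hadd B (C \ B) disjoint_sdiff_self_right, Set.union_diff_cancel h]
  have hmono : ∀ {B C : Set ℕ}, B ⊆ C → μ B ≤ μ C := by
    intro B C h
    have := hsplit h
    have := hpos (C \ B)
    linarith
  -- halving lemma
  have halve : ∀ A : Set ℕ, A.Infinite → ∃ B, B ⊆ A ∧ B.Infinite ∧ μ B ≤ μ A / 2 := by
    intro A hA
    obtain e := hA.natEmbedding
    set B : Set ℕ := Set.range (fun k => (e (2 * k) : ℕ)) with hB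
    have hBsub : B ⊆ A := by
      rintro x ⟨k, rfl⟩; exact (e (2 * k)).2
    have hBinf : B.Infinite := by
      apply Set.infinite_range_of_injective
      intro i j hij
      have : e (2 * i) = e (2 * j) := Subtype.ext hij
      have := e.injective this
      omega
    have hCinf : (A \ B).Infinite := by
      apply Set.Infinite.mono (s := Set.range (fun k => (e (2 * k + 1) : ℕ)))
      · rintro x ⟨k, rfl⟩
        refine ⟨(e (2 * k + 1)).2, ?_⟩
        rintro ⟨j, hj⟩
        have : e (2 * j) = e (2 * k + 1) := Subtype.ext hj
        have := e.injective this
        omega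
      · apply Set.infinite_range_of_injective
        intro i j hij
        have : e (2 * i + 1) = e (2 * j + 1) := Subtype.ext hij
        have := e.injective this
        omega
    have hsum : μ A = μ B + μ (A \ B) := hsplit hBsub
    by_cases h : μ B ≤ μ A / 2
    · exact ⟨B, hBsub, hBinf, h⟩
    · exact ⟨A \ B, Set.diff_subset, hCinf, by linarith⟩
  choose F hFsub hFinf hFle using halve
  set g : {A : Set ℕ // A.Infinite} → {A : Set ℕ // A.Infinite} :=
    fun p => ⟨F p.1 p.2, hFinf p.1 p.2⟩ with hg
  set A : ℕ → {A : Set ℕ // A.Infinite} :=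
    fun n => g^[n] ⟨Set.univ, Set.infinite_univ⟩ with hA
  have hstep : ∀ n, A (n + 1) = g (A n) := by
    intro n; simp [hA, Function.iterate_succ_apply']
  have hsub : ∀ n, (A (n + 1)).1 ⊆ (A n).1 := by
    intro n; rw [hstep n]; exact hFsub _ _
  have hanti : ∀ {n m}, n ≤ m → (A m).1 ⊆ (A n).1 := by
    intro n m h
    have hA2 : Antitone (fun n => (A n).1) := antitone_nat_of_succ_le hsub
    exact hA2 h
  have hbound : ∀ n, μ (A n).1 ≤ (1 / 2) ^ n := by
    intro n
    induction n with
    | zero => simp [hA, huniv]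
    | succ k ih =>
        have : μ (A (k + 1)).1 ≤ μ (A k).1 / 2 := by
          rw [hstep k]; exact hFle _ _
        rw [pow_succ]
        linarith
  -- pick strictly increasing diagonal sequence
  have hgt : ∀ n m : ℕ, ∃ k, k ∈ (A n).1 ∧ m < k := by
    intro n m
    obtain ⟨b, hb, hlt⟩ := (A n).2.exists_gt m
    exact ⟨b, hb, hlt⟩
  choose f hf1 hf2 using hgt
  set a : ℕ → ℕ := fun n => Nat.rec (f 0 0) (fun n prev => f (n + 1) prev) n with ha
  have ha0 : ∀ n, a n ∈ (A n).1 := by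
    intro n; cases n with
    | zero => exact hf1 0 0
    | succ k => exact hf1 (k + 1) (a k)
  have hmonoa : StrictMono a := by
    apply strictMono_nat_of_lt_succ
    intro n
    exact hf2 (n + 1) (a n)
  set D : Set ℕ := Set.range a with hD
  have hDinf : D.Infinite := Set.infinite_range_of_injective hmonoa.injective
  have hDpos : 0 < μ D := hinf D hDinf
  have hDfin : ∀ n, (D \ (A n).1).Finite := by
    intro n
    apply Set.Finite.subset ((Set.finite_Iio n).image a)
    rintro x ⟨⟨k, rfl⟩, hx⟩
    refine ⟨k, ?_, rfl⟩
    simp only [Set.mem_Iio]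
    by_contra h
    exact hx (hanti (Nat.le_of_not_lt h) (ha0 k))
  have hDle : ∀ n, μ D ≤ (1 / 2) ^ n := by
    intro n
    have h1 : D ⊆ (A n).1 ∪ (D \ (A n).1) := by
      intro x hx
      by_cases h : x ∈ (A n).1
      · exact Or.inl h
      · exact Or.inr ⟨hx, h⟩
    have h2 : μ ((A n).1 ∪ (D \ (A n).1)) = μ (A n).1 + μ (D \ (A n).1) :=
      hadd _ _ disjoint_sdiff_self_right
    have h3 := hfin _ (hDfin n)
    have := hmono h1
    have := hbound n
    linarith
  obtain ⟨n, hn⟩ := exists_pow_lt_of_lt_one hDpos (by norm_num : (1 : ℝ) / 2 < 1)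
  exact absurd (hDle n) (not_le.mpr hn)
end

section
/- Let μ be a finitely additive probability measure on ω vanishing on points. Then the following are equivalent: (1) for every ⊆-decreasing sequence (A_n) of subsets of ω there is a set A with A ⊆* A_n for all n (A \ A_n finite) and μ(A) = lim_n μ(A_n); (2) for every ⊆-increasing sequence (A_n) there is a set A with A_n ⊆* A for all n and μ(A) = lim_n μ(A_n); (3) for every sequence (A_n) of pairwise disjoint subsets of ω there is a set A with A_n ⊆* A for all n and μ(A) = Σ_n μ(A_n). -/
open Filter Set Function

theorem stmt2 (μ : Set ℕ → ℝ)
    (hadd : ∀ A B : Set ℕ, Disjoint A B → μ (A ∪ B) = μ A + μ B)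
    (hnonneg : ∀ A : Set ℕ, 0 ≤ μ A)
    (hprob : μ Set.univ = 1)
    (hpoints : ∀ n : ℕ, μ {n} = 0) :
    List.TFAE
      [ ∀ A : ℕ → Set ℕ, (∀ n, A (n + 1) ⊆ A n) →
          ∃ B : Set ℕ, (∀ n, (B \ A n).Finite) ∧
            Filter.Tendsto (fun n => μ (A n)) Filter.atTop (nhds (μ B)),
        ∀ A : ℕ → Set ℕ, (∀ n, A n ⊆ A (n + 1)) →
          ∃ B : Set ℕ, (∀ n, (A n \ B).Finite) ∧
            Filter.Tendsto (fun n => μ (A n)) Filter.atTop (nhds (μ B)),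
        ∀ A : ℕ → Set ℕ, Pairwise (Function.onFun Disjoint A) →
          ∃ B : Set ℕ, (∀ n, (A n \ B).Finite) ∧
            HasSum (fun n => μ (A n)) (μ B) ] := by
  have hcompl : ∀ C : Set ℕ, μ Cᶜ = 1 - μ C := by
    intro C
    have h := hadd C Cᶜ disjoint_compl_right
    rw [Set.union_compl_self, hprob] at h
    linarith
  tfae_have 1 → 2 := by
    intro h1 A hA
    obtain ⟨B, hB1, hB2⟩ := h1 (fun n => (A n)ᶜ) (fun n => compl_subset_compl.mpr (hA n))
    refine ⟨Bᶜ, fun n => ?_, ?_⟩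
    · have he : A n \ Bᶜ = B \ (A n)ᶜ := by ext x; simp; tauto
      rw [he]; exact hB1 n
    · have he : (fun n => μ (A n)) = fun n => 1 - μ ((A n)ᶜ) := by
        funext n; rw [hcompl]; ring
      rw [he, hcompl]
      exact tendsto_const_nhds.sub hB2
  tfae_have 2 → 1 := by
    intro h2 A hA
    obtain ⟨B, hB1, hB2⟩ := h2 (fun n => (A n)ᶜ) (fun n => compl_subset_compl.mpr (hA n))
    refine ⟨Bᶜ, fun n => ?_, ?_⟩
    · have he : Bᶜ \ A n = (A n)ᶜ \ B := by ext x; simp; tauto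
      rw [he]; exact hB1 n
    · have he : (fun n => μ (A n)) = fun n => 1 - μ ((A n)ᶜ) := by
        funext n; rw [hcompl]; ring
      rw [he, hcompl]
      exact tendsto_const_nhds.sub hB2
  tfae_have 2 → 3 := by
    intro h2 A hA
    set S : ℕ → Set ℕ := fun n => ⋃ k ∈ Finset.range (n + 1), A k with hSdef
    have hSsucc : ∀ n, S (n + 1) = S n ∪ A (n + 1) := by
      intro n
      ext x
      simp only [hSdef, Set.mem_iUnion, Finset.mem_range, Set.mem_union]
      constructor
      · rintro ⟨k, hk, hxk⟩
        rcases Nat.lt_succ_iff_lt_or_eq.1 hk with h | rfl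
        · exact Or.inl ⟨k, h, hxk⟩
        · exact Or.inr hxk
      · rintro (⟨k, hk, hxk⟩ | hx)
        · exact ⟨k, by omega, hxk⟩
        · exact ⟨n + 1, by omega, hx⟩
    have hmem : ∀ n x, x ∈ S n ↔ ∃ k ≤ n, x ∈ A k := by
      intro n x
      simp [hSdef, Nat.lt_succ_iff]
    have hSmono : ∀ n, S n ⊆ S (n + 1) := by
      intro n x hx
      rw [hSsucc]; exact Or.inl hx
    have hSdisj : ∀ n, Disjoint (S n) (A (n + 1)) := by
      intro n
      rw [Set.disjoint_left]
      intro x hx hx2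
      obtain ⟨k, hk, hxk⟩ := (hmem n x).1 hx
      exact Set.disjoint_left.1 (hA (show k ≠ n + 1 by omega)) hxk hx2
    have hsum : ∀ n, μ (S n) = ∑ k ∈ Finset.range (n + 1), μ (A k) := by
      intro n
      induction n with
      | zero => simp [hSdef]
      | succ n ih =>
        rw [hSsucc, hadd _ _ (hSdisj n), ih,
          Finset.sum_range_succ (f := fun k => μ (A k)) (n := n + 1)]
    obtain ⟨B, hB1, hB2⟩ := h2 S hSmono
    refine ⟨B, fun n => ?_, ?_⟩
    · refine (hB1 n).subset (Set.diff_subset_diff_left ?_)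
      intro x hx
      exact (hmem n x).2 ⟨n, le_rfl, hx⟩
    · rw [hasSum_iff_tendsto_nat_of_nonneg (fun i => hnonneg _)]
      rw [← tendsto_add_atTop_iff_nat 1]
      have he : (fun n => ∑ k ∈ Finset.range (n + 1), μ (A k)) = fun n => μ (S n) := by
        funext n; rw [hsum]
      exact he ▸ hB2
  tfae_have 3 → 2 := by
    intro h3 A hA
    have hmonoA : Monotone A := monotone_nat_of_le_succ hA
    set D : ℕ → Set ℕ := fun n => Nat.casesOn n (A 0) (fun k => A (k + 1) \ A k) with hDdef
    have hD0 : D 0 = A 0 := rfl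
    have hDs : ∀ k, D (k + 1) = A (k + 1) \ A k := fun k => rfl
    have hDsub : ∀ n, D n ⊆ A n := by
      intro n; cases n with
      | zero => exact le_rfl
      | succ k => rw [hDs]; exact Set.diff_subset
    have hkey : ∀ m n, m < n → Disjoint (D m) (D n) := by
      intro m n hmn
      obtain ⟨k, rfl⟩ := Nat.exists_eq_add_of_lt hmn
      have h1 : D m ⊆ A (m + k) := (hDsub m).trans (hmonoA (Nat.le_add_right m k))
      rw [hDs]
      exact (disjoint_sdiff_self_right (x := A (m + k)) (y := A (m + k + 1))).mono_left h1
    have hDdisj : Pairwise (Function.onFun Disjoint D) := by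
      intro i j hij
      rcases lt_or_gt_of_ne hij with h | h
      · exact hkey i j h
      · exact (hkey j i h).symm
    have hAeq : ∀ n, A (n + 1) = A n ∪ D (n + 1) := by
      intro n; rw [hDs]; exact (Set.union_diff_cancel (hA n)).symm
    have hsum : ∀ n, ∑ k ∈ Finset.range (n + 1), μ (D k) = μ (A n) := by
      intro n
      induction n with
      | zero => simp [hD0]
      | succ n ih =>
        rw [Finset.sum_range_succ, ih, hAeq n]
        refine (hadd _ _ ?_).symm
        rw [hDs]
        exact disjoint_sdiff_self_right
    have hcover : ∀ n, A n ⊆ ⋃ k ∈ Finset.range (n + 1), D k := by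
      intro n
      induction n with
      | zero => intro x hx; simp [hD0]; exact hx
      | succ n ih =>
        rw [hAeq]
        rintro x (hx | hx)
        · obtain ⟨s, hs⟩ := Set.mem_iUnion.1 (ih hx)
          simp only [Set.mem_iUnion, Finset.mem_range] at *
          obtain ⟨hk, hxk⟩ := hs
          exact ⟨s, by omega, hxk⟩
        · simp only [Set.mem_iUnion, Finset.mem_range]
          exact ⟨n + 1, by omega, hx⟩
    obtain ⟨B, hB1, hB2⟩ := h3 D hDdisj
    refine ⟨B, fun n => ?_, ?_⟩
    · refine Set.Finite.subset (Set.Finite.biUnion (Finset.range (n + 1)).finite_toSet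
        (fun k _ => hB1 k)) ?_
      intro x hx
      obtain ⟨hx1, hx2⟩ := hx
      obtain ⟨k, hk, hxk⟩ := by
        simpa only [Set.mem_iUnion, Finset.mem_range] using hcover n hx1
      simp only [Set.mem_iUnion, Finset.mem_coe, Finset.mem_range]
      exact ⟨k, hk, hxk, hx2⟩
    · have ht := (hasSum_iff_tendsto_nat_of_nonneg (fun i => hnonneg _) _).1 hB2
      have ht2 := (tendsto_add_atTop_iff_nat 1).2 ht
      have he : (fun n => ∑ k ∈ Finset.range (n + 1), μ (D k)) = fun n => μ (A n) := by
        funext n; rw [hsum]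
      exact he ▸ ht2
  tfae_finish
end

section
/- Let μ be a finitely additive probability measure on ω vanishing on points. If μ is not a P-measure, then there exists a ⊆-decreasing sequence (A_n) of subsets of ω and a real ε > 0 such that for every set A ⊆ ω that is a pseudointersection of (A_n) (i.e. A ⊆* A_n for all n), one has μ(A) < lim_{n→∞} μ(A_n) − ε. -/
theorem stmt4 (μ : Set ℕ → ℝ)
    (hadd : ∀ A B : Set ℕ, Disjoint A B → μ (A ∪ B) = μ A + μ B)
    (hnonneg : ∀ A : Set ℕ, 0 ≤ μ A)
    (hprob : μ Set.univ = 1)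
    (hpoints : ∀ n : ℕ, μ {n} = 0)
    (hnotP : ¬ ∀ A : ℕ → Set ℕ, (∀ n, A (n + 1) ⊆ A n) →
      ∃ B : Set ℕ, (∀ n, (B \ A n).Finite) ∧
        Filter.Tendsto (fun n => μ (A n)) Filter.atTop (nhds (μ B))) :
    ∃ (A : ℕ → Set ℕ) (ε L : ℝ), 0 < ε ∧ (∀ n, A (n + 1) ⊆ A n) ∧
      Filter.Tendsto (fun n => μ (A n)) Filter.atTop (nhds L) ∧
      ∀ B : Set ℕ, (∀ n, (B \ A n).Finite) → μ B < L - ε := by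
  push_neg at hnotP
  obtain ⟨A, hdec, hA⟩ := hnotP
  -- basic facts about μ
  have hempty : μ ∅ = 0 := by
    have := hadd ∅ ∅ (disjoint_bot_left)
    simp at this
    linarith
  have hmono : ∀ {X Y : Set ℕ}, X ⊆ Y → μ X ≤ μ Y := by
    intro X Y h
    have hd : Disjoint X (Y \ X) := disjoint_sdiff_self_right
    have h1 : μ (X ∪ (Y \ X)) = μ X + μ (Y \ X) := hadd _ _ hd
    rw [Set.union_diff_cancel h] at h1
    linarith [hnonneg (Y \ X)]
  have hsub : ∀ X Y : Set ℕ, μ (X ∪ Y) ≤ μ X + μ Y := by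
    intro X Y
    have hd : Disjoint X (Y \ X) := disjoint_sdiff_self_right
    have h1 : μ (X ∪ (Y \ X)) = μ X + μ (Y \ X) := hadd _ _ hd
    rw [Set.union_diff_self] at h1
    linarith [hmono (Set.diff_subset : Y \ X ⊆ Y)]
  have hfin : ∀ X : Set ℕ, X.Finite → μ X = 0 := by
    intro X hX
    refine Set.Finite.induction_on (motive := fun s _ => μ s = 0) X hX hempty ?_
    intro a s _ _ ih
    have h1 : μ (insert a s) ≤ μ {a} + μ s := by
      rw [Set.insert_eq]; exact hsub _ _
    have h2 := hnonneg (insert a s)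
    rw [hpoints a, ih] at h1
    linarith
  -- chain property
  have hchain : ∀ n m : ℕ, n ≤ m → A m ⊆ A n := by
    intro n m h
    induction h with
    | refl => exact subset_rfl
    | step h ih => exact fun _ hx => (ih (hdec _ hx) : _)
  -- the limit L
  set L : ℝ := ⨅ n, μ (A n) with hLdef
  have hanti : Antitone (fun n => μ (A n)) := by
    intro n m h
    exact hmono (hchain n m h)
  have hbdd : BddBelow (Set.range fun n => μ (A n)) := ⟨0, fun x ⟨n, hn⟩ => hn ▸ hnonneg _⟩
  have hL : Filter.Tendsto (fun n => μ (A n)) Filter.atTop (nhds L) :=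
    tendsto_atTop_ciInf hanti hbdd
  -- every pseudointersection has measure ≤ L
  have hle : ∀ B : Set ℕ, (∀ n, (B \ A n).Finite) → μ B ≤ L := by
    intro B hB
    refine le_ciInf fun n => ?_
    have h1 : B ⊆ A n ∪ (B \ A n) := fun x hx => by
      by_cases h : x ∈ A n
      · exact Or.inl h
      · exact Or.inr ⟨hx, h⟩
    calc μ B ≤ μ (A n ∪ (B \ A n)) := hmono h1
      _ ≤ μ (A n) + μ (B \ A n) := hsub _ _
      _ = μ (A n) := by rw [hfin _ (hB n), add_zero]
  -- strictly less
  have hlt : ∀ B : Set ℕ, (∀ n, (B \ A n).Finite) → μ B < L := by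
    intro B hB
    rcases lt_or_eq_of_le (hle B hB) with h | h
    · exact h
    · exact absurd (h ▸ hL) (hA B hB)
  -- uniform gap by contradiction
  have key : ∃ ε : ℝ, 0 < ε ∧ ∀ B : Set ℕ, (∀ n, (B \ A n).Finite) → μ B < L - ε := by
    by_contra hcon
    push_neg at hcon
    have hex : ∀ k : ℕ, ∃ B : Set ℕ, (∀ n, (B \ A n).Finite) ∧ L - 1 / (k + 1) ≤ μ B := by
      intro k
      obtain ⟨B, hB1, hB2⟩ := hcon (1 / (k + 1)) (by positivity)
      exact ⟨B, hB1, hB2⟩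
    choose B hBps hBge using hex
    -- increasing unions
    set C : ℕ → Set ℕ := fun k => ⋃ j ∈ Finset.range (k + 1), B j with hCdef
    have hCps : ∀ k n, (C k \ A n).Finite := by
      intro k n
      have : C k \ A n ⊆ ⋃ j ∈ Finset.range (k + 1), (B j \ A n) := by
        intro x ⟨hx1, hx2⟩
        simp only [hCdef, Set.mem_iUnion, exists_prop] at hx1
        obtain ⟨j, hj, hxj⟩ := hx1
        exact Set.mem_biUnion hj ⟨hxj, hx2⟩
      exact Set.Finite.subset (Set.Finite.biUnion (Finset.range (k + 1)).finite_toSet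
        fun j _ => hBps j n) this
    have hCge : ∀ k : ℕ, L - 1 / (k + 1) ≤ μ (C k) := by
      intro k
      refine le_trans (hBge k) (hmono ?_)
      intro x hx
      simp only [hCdef, Set.mem_iUnion]
      exact ⟨k, Finset.self_mem_range_succ k, hx⟩
    -- interpolating set
    set D : Set ℕ := ⋃ k, (C k ∩ A k) with hDdef
    have hDps : ∀ n, (D \ A n).Finite := by
      intro n
      have hsubD : D \ A n ⊆ ⋃ j ∈ Finset.range n, (C j \ A n) := by
        intro x ⟨hx1, hx2⟩
        simp only [hDdef, Set.mem_iUnion] at hx1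
        obtain ⟨k, hxC, hxA⟩ := hx1
        have hk : k < n := by
          by_contra hk
          exact hx2 (hchain n k (le_of_not_gt hk) hxA)
        simp only [Set.mem_iUnion]
        exact ⟨k, Finset.mem_range.2 hk, hxC, hx2⟩
      exact Set.Finite.subset (Set.Finite.biUnion (Finset.range n).finite_toSet
        fun j _ => hCps j n) hsubD
    have hDge : ∀ k : ℕ, L - 1 / (k + 1) ≤ μ D := by
      intro k
      refine le_trans (hCge k) ?_
      have h1 : C k ⊆ D ∪ (C k \ A k) := by
        intro x hx
        by_cases h : x ∈ A k
        · exact Or.inl (Set.mem_iUnion.2 ⟨k, hx, h⟩)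
        · exact Or.inr ⟨hx, h⟩
      calc μ (C k) ≤ μ (D ∪ (C k \ A k)) := hmono h1
        _ ≤ μ D + μ (C k \ A k) := hsub _ _
        _ = μ D := by rw [hfin _ (hCps k k), add_zero]
    have hDL : L ≤ μ D := by
      have htend : Filter.Tendsto (fun k : ℕ => μ D + 1 / (k + 1)) Filter.atTop (nhds (μ D)) := by
        have := tendsto_one_div_add_atTop_nhds_zero_nat (𝕜 := ℝ)
        have h2 := Filter.Tendsto.const_add (μ D) this
        simpa using h2
      refine ge_of_tendsto htend (Filter.Eventually.of_forall fun k => ?_)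
      have := hDge k
      linarith
    exact absurd (hlt D hDps) (not_lt.2 hDL)
  obtain ⟨ε, hε, hεB⟩ := key
  exact ⟨A, ε, L, hε, hdec, hL, hεB⟩
end

section
/- Let μ be a P-measure on ω and let x be a nonprincipal ultrafilter on ω such that the Radon extension of μ to βω satisfies μ̌({x}) > 0; equivalently, δ := inf{μ(A) : A ∈ x} > 0. Then x is a P-point: for every sequence (A_n) of elements of x decreasing to ∅ there exists B ∈ x with B ⊆* A_n for every n. -/
theorem stmt5 (μ : Set ℕ → ℝ)
    (hadd : ∀ A B : Set ℕ, Disjoint A B → μ (A ∪ B) = μ A + μ B)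
    (hnonneg : ∀ A : Set ℕ, 0 ≤ μ A)
    (hprob : μ Set.univ = 1)
    (hpoints : ∀ n : ℕ, μ {n} = 0)
    (hP : ∀ A : ℕ → Set ℕ, (∀ n, A (n + 1) ⊆ A n) →
      ∃ B : Set ℕ, (∀ n, (B \ A n).Finite) ∧
        Filter.Tendsto (fun n => μ (A n)) Filter.atTop (nhds (μ B)))
    (x : Ultrafilter ℕ) (hfree : ∀ A : Set ℕ, A.Finite → A ∉ x)
    (δ : ℝ) (hδ : 0 < δ) (hδx : ∀ A ∈ x, δ ≤ μ A) :
    ∀ A : ℕ → Set ℕ, (∀ n, A n ∈ x) → (∀ n, A (n + 1) ⊆ A n) → (⋂ n, A n) = ∅ →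
      ∃ B ∈ x, ∀ n, (B \ A n).Finite := by
  intro A hAx hAmono hAint
  obtain ⟨B, hBfin, hBtend⟩ := hP A hAmono
  -- finite sets are null
  have hempty : μ ∅ = 0 := by
    have := hadd ∅ ∅ disjoint_bot_left
    simp at this
    linarith
  have hfnull : ∀ t : Finset ℕ, μ ↑t = 0 := by
    intro t
    induction t using Finset.induction_on with
    | empty => simpa using hempty
    | @insert a t ha ih =>
      have hd : Disjoint ({a} : Set ℕ) ↑t := by simpa using ha
      have := hadd {a} ↑t hd
      rw [Set.singleton_union] at this
      rw [Finset.coe_insert, this, hpoints, ih]; ring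
  have hnull : ∀ s : Set ℕ, s.Finite → μ s = 0 := by
    intro s hs
    have : s = ↑hs.toFinset := by simp
    rw [this, hfnull]
  refine ⟨B, ?_, hBfin⟩
  by_contra hBx
  have hcomp : Bᶜ ∈ x := Ultrafilter.compl_mem_iff_notMem.mpr hBx
  -- μ (A n ∩ B) = μ B
  have hinter : ∀ n, μ (A n ∩ B) = μ B := by
    intro n
    have hd : Disjoint (A n ∩ B) (B \ A n) := by
      apply Set.disjoint_left.mpr
      intro a ha hb
      exact hb.2 ha.1
    have := hadd _ _ hd
    have heq : (A n ∩ B) ∪ (B \ A n) = B := by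
      ext a; constructor
      · rintro (⟨_, hb⟩ | ⟨hb, _⟩) <;> exact hb
      · intro hb
        by_cases h : a ∈ A n
        · exact Or.inl ⟨h, hb⟩
        · exact Or.inr ⟨hb, h⟩
    rw [heq] at this
    rw [this, hnull _ (hBfin n)]; ring
  -- μ (A n \ B) = μ (A n) - μ B
  have hdiff : ∀ n, μ (A n \ B) = μ (A n) - μ B := by
    intro n
    have hd : Disjoint (A n ∩ B) (A n \ B) := by
      apply Set.disjoint_left.mpr
      intro a ha hb
      exact hb.2 ha.2
    have := hadd _ _ hd
    rw [Set.inter_union_diff] at this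
    rw [this, hinter n]; ring
  have hmem : ∀ n, δ ≤ μ (A n \ B) := by
    intro n
    exact hδx _ ((x : Filter ℕ).inter_sets (hAx n) hcomp)
  have htend0 : Filter.Tendsto (fun n => μ (A n \ B)) Filter.atTop (nhds 0) := by
    have := hBtend.sub_const (μ B)
    simp only [sub_self] at this
    apply this.congr
    intro n
    exact (hdiff n).symm
  have : δ ≤ 0 := ge_of_tendsto' htend0 hmem
  linarith
end

section
/- Let μ be a finitely additive probability measure on ω that is non-atomic, meaning: for every ε > 0 there is a finite partition of ω into sets each of μ-measure at most ε. Then for every P-point ultrafilter U on ω there exists N ∈ U with μ(N) = 0. -/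
theorem stmt6 (μ : Set ℕ → ℝ)
    (hadd : ∀ A B : Set ℕ, Disjoint A B → μ (A ∪ B) = μ A + μ B)
    (hnonneg : ∀ A : Set ℕ, 0 ≤ μ A)
    (hprob : μ Set.univ = 1)
    (hna : ∀ ε : ℝ, 0 < ε → ∃ (N : ℕ) (P : Fin N → Set ℕ),
      (⋃ i, P i) = Set.univ ∧ Pairwise (Function.onFun Disjoint P) ∧ ∀ i, μ (P i) ≤ ε)
    (U : Ultrafilter ℕ) (hfree : ∀ A : Set ℕ, A.Finite → A ∉ U)
    (hpp : ∀ A : ℕ → Set ℕ, (∀ n, A n ∈ U) → ∃ B ∈ U, ∀ n, (B \ A n).Finite) :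
    ∃ N ∈ U, μ N = 0 := by
  -- monotonicity
  have hmono : ∀ A B : Set ℕ, A ⊆ B → μ A ≤ μ B := by
    intro A B hAB
    have h := hadd A (B \ A) Set.disjoint_sdiff_right
    rw [Set.union_diff_cancel hAB] at h
    nlinarith [hnonneg (B \ A)]
  -- singletons have measure 0
  have hsing : ∀ x : ℕ, μ {x} = 0 := by
    intro x
    have hle : ∀ ε : ℝ, 0 < ε → μ {x} ≤ ε := by
      intro ε hε
      obtain ⟨N, P, hcov, hdisj, hsmall⟩ := hna ε hε
      have hx : x ∈ ⋃ i, P i := by rw [hcov]; trivial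
      obtain ⟨i, hi⟩ := Set.mem_iUnion.mp hx
      exact le_trans (hmono _ _ (Set.singleton_subset_iff.mpr hi)) (hsmall i)
    by_contra h
    have hpos : 0 < μ {x} := lt_of_le_of_ne (hnonneg _) (Ne.symm h)
    linarith [hle (μ {x} / 2) (by linarith)]
  -- finite sets have measure 0
  have hfin : ∀ A : Set ℕ, A.Finite → μ A = 0 := by
    intro A hA
    refine Set.Finite.induction_on A hA ?_ ?_
    · have := hadd ∅ ∅ (by simp)
      simp at this; linarith
    · intro a s has hs ih
      have hd : Disjoint ({a} : Set ℕ) s := Set.disjoint_singleton_left.mpr has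
      have := hadd {a} s hd
      rw [Set.singleton_union] at this
      rw [this, hsing a, ih, add_zero]
  -- choose for each n a member of U with small measure
  have hstep : ∀ n : ℕ, ∃ A ∈ U, μ A ≤ 1 / (n + 1) := by
    intro n
    obtain ⟨N, P, hcov, hdisj, hsmall⟩ := hna (1 / (n + 1)) (by positivity)
    have hU : (⋃ i ∈ (Set.univ : Set (Fin N)), P i) ∈ U := by
      have he : (⋃ i ∈ (Set.univ : Set (Fin N)), P i) = Set.univ := by
        simpa using hcov
      rw [he]; exact Filter.univ_mem
    obtain ⟨i, _, hi⟩ := (Ultrafilter.finite_biUnion_mem_iff Set.finite_univ).mp hU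
    exact ⟨P i, hi, hsmall i⟩
  choose A hAU hAle using hstep
  obtain ⟨B, hBU, hB⟩ := hpp A hAU
  refine ⟨B, hBU, ?_⟩
  have hle : ∀ n : ℕ, μ B ≤ 1 / (n + 1) := by
    intro n
    have hsub : B ⊆ A n ∪ (B \ A n) := by
      intro x hx
      by_cases h : x ∈ A n
      · exact Or.inl h
      · exact Or.inr ⟨hx, h⟩
    have := hmono _ _ hsub
    rw [hadd _ _ (Set.disjoint_sdiff_right)] at this
    rw [hfin _ (hB n)] at this
    linarith [hAle n]
  by_contra h
  have hpos : 0 < μ B := lt_of_le_of_ne (hnonneg _) (Ne.symm h)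
  obtain ⟨n, hn⟩ := exists_nat_gt (1 / μ B)
  have h1 : (1 : ℝ) / (n + 1) < μ B := by
    rw [div_lt_iff₀ (by positivity)]
    rw [div_lt_iff₀ hpos] at hn
    nlinarith
  linarith [hle n]
end

section
/- Let U be a P-point ultrafilter on ω, let (Ω, Σ, λ) be a probability measure space, and define ν on sequences M : ω → Σ by ν(M) = lim_{i→U} λ(M(i)) (the ultrafilter limit). Then for every sequence (M_n) of functions ω → Σ with M_{n+1}(k) ⊆ M_n(k) for all n, k, there exists M : ω → Σ such that (1) for every n, M(k) ⊆ M_n(k) for all but finitely many k, and (2) ν(M) = lim_{n→∞} ν(M_n). -/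
open MeasureTheory

theorem stmt7 {Ω : Type*} [MeasurableSpace Ω] (lam : Measure Ω)
    [IsProbabilityMeasure lam]
    (U : Ultrafilter ℕ) (hfree : ∀ A : Set ℕ, A.Finite → A ∉ U)
    (hpp : ∀ A : ℕ → Set ℕ, (∀ n, A n ∈ U) → ∃ B ∈ U, ∀ n, (B \ A n).Finite)
    (M : ℕ → ℕ → Set Ω) (hmeas : ∀ n k, MeasurableSet (M n k))
    (hdec : ∀ n k, M (n + 1) k ⊆ M n k)
    (ν : ℕ → ℝ)
    (hν : ∀ n, Filter.Tendsto (fun i => (lam (M n i)).toReal) (U : Filter ℕ) (nhds (ν n)))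
    (r : ℝ) (hr : Filter.Tendsto ν Filter.atTop (nhds r)) :
    ∃ N : ℕ → Set Ω, (∀ k, MeasurableSet (N k)) ∧
      (∀ n, ∀ᶠ k in Filter.atTop, N k ⊆ M n k) ∧
      Filter.Tendsto (fun i => (lam (N i)).toReal) (U : Filter ℕ) (nhds r) := by
  classical
  set A : ℕ → Set ℕ := fun n => {k | |(lam (M n k)).toReal - ν n| < 1 / (n + 1)} with hA
  have hAU : ∀ n, A n ∈ U := by
    intro n
    have h1 : (0 : ℝ) < 1 / (n + 1) := by positivity
    have := (hν n) (Metric.ball_mem_nhds (ν n) h1)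
    simpa [hA, Metric.ball, Real.dist_eq, Set.preimage] using this
  obtain ⟨B, hBU, hBfin⟩ := hpp A hAU
  set g : ℕ → ℕ := fun k => Nat.findGreatest (fun n => ∀ m ≤ n, k ∈ A m) k with hg
  set N : ℕ → Set Ω := fun k => if k ∈ B ∧ k ∈ A 0 then M (g k) k else ∅ with hN
  have hmono : ∀ (a b : ℕ), a ≤ b → ∀ k, M b k ⊆ M a k := by
    intro a b hab k
    induction b with
    | zero => simp_all
    | succ b ih =>
      rcases Nat.lt_or_ge a (b + 1) with h | h
      · exact (hdec b k).trans (ih (by omega))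
      · have : a = b + 1 := by omega
        subst this; exact subset_rfl
  have hgood : ∀ n, ∃ K, ∀ k, K ≤ k → k ∈ B → ∀ m ≤ n, k ∈ A m := by
    intro n
    have hfin : (⋃ m ∈ Finset.range (n + 1), (B \ A m)).Finite :=
      Set.Finite.biUnion (Finset.range (n + 1)).finite_toSet (fun m _ => hBfin m)
    obtain ⟨K, hK⟩ := hfin.bddAbove
    refine ⟨K + 1, ?_⟩
    intro k hk hkB m hm
    by_contra h
    have hmem : k ∈ ⋃ m ∈ Finset.range (n + 1), (B \ A m) := by
      refine Set.mem_biUnion (Finset.mem_range.mpr (by omega)) ⟨hkB, h⟩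
    have := hK hmem
    omega
  have hNmeas : ∀ k, MeasurableSet (N k) := by
    intro k
    by_cases h : k ∈ B ∧ k ∈ A 0
    · simp only [hN, if_pos h]; exact hmeas _ _
    · simp only [hN, if_neg h]; exact MeasurableSet.empty
  have hglarge : ∀ n k, n ≤ k → k ∈ B → (∀ m ≤ n, k ∈ A m) → n ≤ g k := by
    intro n k hnk hkB hP
    exact Nat.le_findGreatest (P := fun n => ∀ m ≤ n, k ∈ A m) hnk hP
  have hgspec : ∀ k, k ∈ A 0 → ∀ m ≤ g k, k ∈ A m := by
    intro k hk0
    have hP0 : ∀ m ≤ 0, k ∈ A m := by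
      intro m hm
      have hm0 : m = 0 := Nat.le_zero.mp hm
      rw [hm0]; exact hk0
    exact Nat.findGreatest_spec (P := fun n => ∀ m ≤ n, k ∈ A m) (Nat.zero_le k) hP0
  refine ⟨N, hNmeas, ?_, ?_⟩
  · intro n
    obtain ⟨K, hK⟩ := hgood n
    filter_upwards [Filter.eventually_ge_atTop (max K n)] with k hk
    by_cases h : k ∈ B ∧ k ∈ A 0
    · have hgk : n ≤ g k :=
        hglarge n k (le_trans (le_max_right K n) hk) h.1
          (hK k (le_trans (le_max_left K n) hk) h.1)
      simp only [hN, if_pos h]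
      exact hmono n (g k) hgk k
    · simp only [hN, if_neg h]; exact Set.empty_subset _
  · rw [Metric.tendsto_nhds]
    intro ε hε
    obtain ⟨n₀, hn₀⟩ := Filter.eventually_atTop.mp
      (hr.eventually (Metric.ball_mem_nhds r (by positivity : (0:ℝ) < ε / 2)))
    obtain ⟨n₁, hn₁⟩ := exists_nat_one_div_lt (show (0:ℝ) < ε / 2 by positivity)
    set n := max n₀ n₁ with hn
    obtain ⟨K, hK⟩ := hgood n
    have hcof : {k : ℕ | max K n ≤ k} ∈ U := by
      have : {k : ℕ | max K n ≤ k} = ({k : ℕ | k < max K n} : Set ℕ)ᶜ := by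
        ext k; simp [not_lt]
      rw [this, Ultrafilter.compl_mem_iff_notMem]
      exact hfree _ (Set.finite_Iio (max K n))
    have hS : B ∩ {k : ℕ | max K n ≤ k} ∈ U := U.toFilter.inter_mem hBU hcof
    refine Filter.mem_of_superset hS ?_
    intro k hk
    obtain ⟨hkB, hkge⟩ := hk
    have hkK : K ≤ k := le_trans (le_max_left K n) hkge
    have hkn : n ≤ k := le_trans (le_max_right K n) hkge
    have hPk : ∀ m ≤ n, k ∈ A m := hK k hkK hkB
    have hk0 : k ∈ A 0 := hPk 0 (Nat.zero_le n)
    have hgk : n ≤ g k := hglarge n k hkn hkB hPk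
    have hAgk : k ∈ A (g k) := hgspec k hk0 (g k) le_rfl
    have hNk : N k = M (g k) k := by
      simp only [hN, if_pos (show k ∈ B ∧ k ∈ A 0 from ⟨hkB, hk0⟩)]
    simp only [Set.mem_setOf_eq, Real.dist_eq, hNk]
    have h1 : |(lam (M (g k) k)).toReal - ν (g k)| < 1 / (g k + 1) := hAgk
    have h2 : |ν (g k) - r| < ε / 2 := by
      have := hn₀ (g k) (le_trans (le_max_left n₀ n₁) hgk)
      simpa [Real.dist_eq] using this
    have h3 : (1 : ℝ) / (g k + 1) ≤ 1 / (n₁ + 1) := by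
      apply one_div_le_one_div_of_le (by positivity)
      have hle : n₁ ≤ g k := le_trans (le_max_right n₀ n₁) hgk
      have hc : (n₁ : ℝ) ≤ (g k : ℝ) := Nat.cast_le.mpr hle
      linarith
    calc |(lam (M (g k) k)).toReal - r|
        ≤ |(lam (M (g k) k)).toReal - ν (g k)| + |ν (g k) - r| := abs_sub_le _ _ _
      _ < 1 / (g k + 1) + ε / 2 := by linarith
      _ ≤ 1 / (n₁ + 1) + ε / 2 := by linarith
      _ < ε / 2 + ε / 2 := by linarith
      _ = ε := by ring
end

section
/- Let U be a nonprincipal ultrafilter on ω such that: for every sequence (a_n) of non-negative reals with lim_{n→U} a_n = 0 there is X ∈ U with Σ_{n∈X} a_n < ∞ (U is semi-selective). Then for every probability measure space (Ω, Σ, λ) and every sequence (P_k) of measurable sets with lim_{k→U} λ(P_k) = 0, there exists X ∈ U such that λ(⋂_{k∈X} ⋃_{i∈X, i>k} P_i) = 0. -/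
open MeasureTheory

lemma stmt8_aux (X : Set ℕ) (f : ℕ → ℝ) (hsum : Summable (X.indicator f))
    (hnn : ∀ n, 0 ≤ X.indicator f n) :
    (∑' i, ENNReal.ofReal (X.indicator f i)) ≠ ⊤ := by
  rw [← ENNReal.ofReal_tsum_of_nonneg hnn hsum]
  exact ENNReal.ofReal_ne_top

theorem stmt8 (U : Ultrafilter ℕ) (hfree : ∀ A : Set ℕ, A.Finite → A ∉ U)
    (hsel : ∀ a : ℕ → ℝ, (∀ n, 0 ≤ a n) →
      Filter.Tendsto a (U : Filter ℕ) (nhds 0) →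
      ∃ X ∈ U, Summable (X.indicator a))
    {Ω : Type*} [MeasurableSpace Ω] (lam : Measure Ω) [IsProbabilityMeasure lam]
    (P : ℕ → Set Ω) (hP : ∀ k, MeasurableSet (P k))
    (h0 : Filter.Tendsto (fun k => (lam (P k)).toReal) (U : Filter ℕ) (nhds 0)) :
    ∃ X ∈ U, lam (⋂ k ∈ X, ⋃ i ∈ X, ⋃ (_ : k < i), P i) = 0 := by
  classical
  obtain ⟨X, hXU, hsum⟩ := hsel (fun k => (lam (P k)).toReal) (fun n => ENNReal.toReal_nonneg) h0
  refine ⟨X, hXU, ?_⟩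
  have hsum2 : (∑' i, lam (if i ∈ X then P i else ∅)) ≠ ⊤ := by
    have heq : ∀ i, lam (if i ∈ X then P i else ∅)
        = ENNReal.ofReal (X.indicator (fun k => (lam (P k)).toReal) i) := by
      intro i
      by_cases hi : i ∈ X <;>
        simp [hi, Set.indicator, ENNReal.ofReal_toReal (measure_lt_top lam _).ne]
    simp only [heq]
    exact stmt8_aux X _ hsum (fun n => Set.indicator_apply_nonneg (fun _ => ENNReal.toReal_nonneg))
  have hBC := measure_limsup_atTop_eq_zero (μ := lam)
    (s := fun i => if i ∈ X then P i else ∅) hsum2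
  refine measure_mono_null ?_ hBC
  intro x hx
  rw [Filter.limsup_eq_iInf_iSup_of_nat]
  simp only [Set.iInf_eq_iInter, Set.iSup_eq_iUnion, Set.mem_iInter, Set.mem_iUnion]
  intro k
  by_cases hk : ∃ j ∈ X, k ≤ j
  · obtain ⟨j, hjX, hjk⟩ := hk
    obtain ⟨i, hik, hiX, hxi⟩ := by
      simpa using Set.mem_iInter₂.1 hx j hjX
    exact ⟨i, le_of_lt (lt_of_le_of_lt hjk hik), by simp [hiX, hxi]⟩
  · exfalso
    push_neg at hk
    exact hfree X (Set.Finite.subset (Set.finite_Iio k) (fun j hj => hk j hj)) hXU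
end

section
/- Let λ be the product probability measure on 2^ω and, for s ∈ 2^{<ω}, define M_s(k) = {x ∈ 2^ω : x(k+i) = s(i) for 0 ≤ i < |s|}. Let (s_n) be a sequence in 2^{<ω} such that for each fixed k the sets M_{s_n}(k), n ∈ ω, are pairwise disjoint, and let α = Σ_n 1/2^{|s_n|} ≤ 1. Define M_α(k) = ⋃_n M_{s_n}(k). Then for every Borel set B ⊆ 2^ω, lim_{k→∞} λ(M_α(k) ∩ B) = α · λ(B). -/
open MeasureTheory Filter

/-- The cylinder determined by the finite word `s` placed at position `k`. -/
def cyl (s : List Bool) (k : ℕ) : Set (ℕ → Bool) :=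
  {x | ∀ i < s.length, x (k + i) = s.getD i false}

/-- Finite constraint sets: a π-system generating the product σ-algebra. -/
def Csys : Set (Set (ℕ → Bool)) :=
  {t | ∃ (F : Finset ℕ) (σ : ℕ → Bool), t = {x | ∀ i ∈ F, x i = σ i}}

lemma measurableSet_constraint (F : Finset ℕ) (σ : ℕ → Bool) :
    MeasurableSet {x : ℕ → Bool | ∀ i ∈ F, x i = σ i} := by
  have : {x : ℕ → Bool | ∀ i ∈ F, x i = σ i} = ⋂ i ∈ (F : Set ℕ), {x | x i = σ i} := by
    ext x; simp
  rw [this]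
  refine MeasurableSet.biInter F.countable_toSet fun i _ => ?_
  have : {x : ℕ → Bool | x i = σ i} = (fun x : ℕ → Bool => x i) ⁻¹' {σ i} := by
    ext x; simp
  rw [this]
  exact measurable_pi_apply i (MeasurableSet.singleton (σ i))

lemma isPiSystem_Csys : IsPiSystem Csys := by
  rintro _ ⟨F, σ, rfl⟩ _ ⟨G, τ, rfl⟩ ⟨x0, hx0F, hx0G⟩
  classical
  refine ⟨F ∪ G, fun i => if i ∈ F then σ i else τ i, ?_⟩
  ext x
  simp only [Set.mem_inter_iff, Set.mem_setOf_eq, Finset.mem_union]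
  constructor
  · rintro ⟨h1, h2⟩ i hi
    by_cases hiF : i ∈ F
    · simp [hiF, h1 i hiF]
    · simp only [hiF, if_false]
      exact h2 i (hi.resolve_left hiF)
  · intro h
    constructor
    · intro i hi
      have := h i (Or.inl hi)
      simpa [hi] using this
    · intro i hi
      have := h i (Or.inr hi)
      by_cases hiF : i ∈ F
      · rw [if_pos hiF] at this
        rw [this]
        rw [← hx0F i hiF]
        exact hx0G i hi
      · rwa [if_neg hiF] at this

lemma generateFrom_Csys :
    (inferInstance : MeasurableSpace (ℕ → Bool)) = MeasurableSpace.generateFrom Csys := by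
  refine le_antisymm ?_ (MeasurableSpace.generateFrom_le ?_)
  · change MeasurableSpace.pi ≤ _
    refine iSup_le fun i => ?_
    refine (@measurable_iff_comap_le _ _ (MeasurableSpace.generateFrom Csys) _
      (fun b : ℕ → Bool => b i)).mp ?_
    refine @measurable_to_countable' _ _ _ _ (MeasurableSpace.generateFrom Csys) _ fun b => ?_
    refine MeasurableSpace.measurableSet_generateFrom ⟨{i}, fun _ => b, ?_⟩
    ext x; simp [Set.preimage, Set.mem_setOf_eq]
  · rintro _ ⟨F, σ, rfl⟩
    exact measurableSet_constraint F σ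

lemma cyl_eq_constraint (w : List Bool) (k : ℕ) :
    cyl w k = {x : ℕ → Bool |
      ∀ i ∈ (Finset.range w.length).image (k + ·), x i = w.getD (i - k) false} := by
  ext x
  simp only [cyl, Set.mem_setOf_eq, Finset.mem_image, Finset.mem_range]
  constructor
  · rintro h i ⟨j, hj, rfl⟩
    simpa using h j hj
  · intro h i hi
    simpa using h (k + i) ⟨i, hi, rfl⟩

lemma card_rangeImage (n k : ℕ) : ((Finset.range n).image (k + ·)).card = n := by
  rw [Finset.card_image_of_injective _ (add_right_injective k), Finset.card_range]

lemma measurableSet_cyl (w : List Bool) (k : ℕ) : MeasurableSet (cyl w k) := by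
  rw [cyl_eq_constraint]
  exact measurableSet_constraint _ (fun i => w.getD (i - k) false)

lemma cyl_mem_Csys (w : List Bool) (k : ℕ) : cyl w k ∈ Csys :=
  ⟨_, _, cyl_eq_constraint w k⟩

lemma toReal_half_pow (n : ℕ) : ((1 / 2 : ENNReal) ^ n).toReal = (1 / 2 : ℝ) ^ n := by
  rw [ENNReal.toReal_pow]
  norm_num

lemma mixing (lam : Measure (ℕ → Bool)) [IsProbabilityMeasure lam]
    (hlam : ∀ (F : Finset ℕ) (σ : ℕ → Bool),
      lam {x | ∀ i ∈ F, x i = σ i} = (1 / 2 : ENNReal) ^ F.card)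
    (w : List Bool) :
    ∀ ⦃B : Set (ℕ → Bool)⦄, MeasurableSet B →
      Filter.Tendsto (fun k => (lam (cyl w k ∩ B)).toReal) atTop
        (nhds (((1 : ℝ) / 2) ^ w.length * (lam B).toReal)) := by
  classical
  have hcyl : ∀ k, lam (cyl w k) = (1 / 2 : ENNReal) ^ w.length := by
    intro k
    rw [cyl_eq_constraint, hlam, card_rangeImage]
  refine MeasurableSpace.induction_on_inter generateFrom_Csys isPiSystem_Csys ?_ ?_ ?_ ?_
  · -- empty
    simpa using tendsto_const_nhds
  · -- basic: constraint sets
    rintro _ ⟨F, σ, rfl⟩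
    set t := {x : ℕ → Bool | ∀ i ∈ F, x i = σ i} with ht
    refine Filter.Tendsto.congr' ?_ (tendsto_const_nhds)
    rw [Filter.EventuallyEq, eventually_atTop]
    refine ⟨F.sup id + 1, fun k hk => ?_⟩
    have hFk : ∀ i ∈ F, i < k := fun i hi =>
      lt_of_le_of_lt (Finset.le_sup (f := id) hi) (by omega)
    have hset : cyl w k ∩ t =
        {x : ℕ → Bool | ∀ i ∈ (Finset.range w.length).image (k + ·) ∪ F,
          x i = (if i ∈ F then σ i else w.getD (i - k) false)} := by
      ext x
      simp only [cyl, ht, Set.mem_inter_iff, Set.mem_setOf_eq, Finset.mem_union,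
        Finset.mem_image, Finset.mem_range]
      constructor
      · rintro ⟨hc, htx⟩ i hi
        rcases hi with ⟨j, hj, rfl⟩ | hiF
        · have : k + j ∉ F := fun h => by have := hFk _ h; omega
          rw [if_neg this]
          simpa using hc j hj
        · rw [if_pos hiF]; exact htx i hiF
      · intro h
        refine ⟨fun j hj => ?_, fun i hi => ?_⟩
        · have hnF : k + j ∉ F := fun h => by have := hFk _ h; omega
          have := h (k + j) (Or.inl ⟨j, hj, rfl⟩)
          rw [if_neg hnF] at this
          simpa using this
        · have := h i (Or.inr hi)
          rwa [if_pos hi] at this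
    have hcard : ((Finset.range w.length).image (k + ·) ∪ F).card
        = w.length + F.card := by
      rw [Finset.card_union_of_disjoint, card_rangeImage]
      rw [Finset.disjoint_left]
      rintro a ha haF
      simp only [Finset.mem_image, Finset.mem_range] at ha
      obtain ⟨j, _, rfl⟩ := ha
      have := hFk _ haF; omega
    rw [hset, hlam, hlam, hcard, toReal_half_pow, toReal_half_pow, pow_add]
  · -- complement
    intro t htm hP
    have key : ∀ k, (lam (cyl w k ∩ tᶜ)).toReal
        = (1 / 2 : ℝ) ^ w.length - (lam (cyl w k ∩ t)).toReal := by
      intro k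
      have h1 : cyl w k ∩ tᶜ = cyl w k \ (cyl w k ∩ t) := by
        ext x; simp [Set.mem_diff]
      rw [h1, measure_diff Set.inter_subset_left ((measurableSet_cyl w k).inter htm).nullMeasurableSet
        (measure_ne_top lam _)]
      rw [ENNReal.toReal_sub_of_le (measure_mono Set.inter_subset_left) (measure_ne_top lam _)]
      rw [hcyl, toReal_half_pow]
    simp only [key]
    have hlim := (tendsto_const_nhds (x := (1 / 2 : ℝ) ^ w.length) (f := atTop)).sub hP
    convert hlim using 2
    have hc : lam tᶜ = 1 - lam t := prob_compl_eq_one_sub htm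
    rw [hc, ENNReal.toReal_sub_of_le prob_le_one ENNReal.one_ne_top]
    simp only [ENNReal.toReal_one]
    ring
  · -- countable disjoint union
    intro f hf hfm hP
    have hsum : ∑' n, lam (f n) ≠ ⊤ := by
      rw [← measure_iUnion hf hfm]
      exact measure_ne_top lam _
    have hbd : Summable fun n => (lam (f n)).toReal := ENNReal.summable_toReal hsum
    have heq : ∀ k, (lam (cyl w k ∩ ⋃ n, f n)).toReal
        = ∑' n, (lam (cyl w k ∩ f n)).toReal := by
      intro k
      rw [Set.inter_iUnion, measure_iUnion
        (fun m n hmn => ((hf hmn).mono Set.inter_subset_right Set.inter_subset_right))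
        (fun n => (measurableSet_cyl w k).inter (hfm n))]
      exact ENNReal.tsum_toReal_eq fun n => measure_ne_top lam _
    simp only [heq]
    have htarget : ((1 : ℝ) / 2) ^ w.length * (lam (⋃ n, f n)).toReal
        = ∑' n, ((1 : ℝ) / 2) ^ w.length * (lam (f n)).toReal := by
      rw [tsum_mul_left, measure_iUnion hf hfm,
        ENNReal.tsum_toReal_eq fun n => measure_ne_top lam _]
    rw [htarget]
    refine tendsto_tsum_of_dominated_convergence hbd hP ?_
    refine Filter.Eventually.of_forall fun k n => ?_
    rw [Real.norm_eq_abs, abs_of_nonneg ENNReal.toReal_nonneg]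
    exact ENNReal.toReal_mono (measure_ne_top lam _) (measure_mono Set.inter_subset_right)

theorem stmt11 (lam : Measure (ℕ → Bool)) [IsProbabilityMeasure lam]
    (hlam : ∀ (F : Finset ℕ) (σ : ℕ → Bool),
      lam {x | ∀ i ∈ F, x i = σ i} = (1 / 2 : ENNReal) ^ F.card)
    (s : ℕ → List Bool)
    (hdisj : ∀ k : ℕ, Pairwise fun m n => Disjoint (cyl (s m) k) (cyl (s n) k))
    (α : ℝ) (hα : HasSum (fun n => ((1 : ℝ) / 2) ^ (s n).length) α) (hα1 : α ≤ 1)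
    (B : Set (ℕ → Bool)) (hB : MeasurableSet B) :
    Filter.Tendsto (fun k => (lam ((⋃ n, cyl (s n) k) ∩ B)).toReal) Filter.atTop
      (nhds (α * (lam B).toReal)) := by
  have hcyl : ∀ (n k : ℕ), lam (cyl (s n) k) = (1 / 2 : ENNReal) ^ (s n).length :=
    fun n k => by rw [cyl_eq_constraint, hlam, card_rangeImage]
  have heq : ∀ k, (lam ((⋃ n, cyl (s n) k) ∩ B)).toReal
      = ∑' n, (lam (cyl (s n) k ∩ B)).toReal := by
    intro k
    rw [Set.iUnion_inter, measure_iUnion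
      (fun m n hmn => ((hdisj k hmn).mono Set.inter_subset_left Set.inter_subset_left))
      (fun n => (measurableSet_cyl _ _).inter hB)]
    exact ENNReal.tsum_toReal_eq fun n => measure_ne_top lam _
  simp only [heq]
  have htarget : α * (lam B).toReal
      = ∑' n, ((1 : ℝ) / 2) ^ (s n).length * (lam B).toReal := by
    rw [tsum_mul_right, hα.tsum_eq]
  rw [htarget]
  refine tendsto_tsum_of_dominated_convergence
    (bound := fun n => ((1 : ℝ) / 2) ^ (s n).length) hα.summable
    (fun n => mixing lam hlam (s n) hB) ?_
  refine Filter.Eventually.of_forall fun k n => ?_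
  rw [Real.norm_eq_abs, abs_of_nonneg ENNReal.toReal_nonneg]
  calc (lam (cyl (s n) k ∩ B)).toReal
      ≤ (lam (cyl (s n) k)).toReal :=
        ENNReal.toReal_mono (measure_ne_top lam _) (measure_mono Set.inter_subset_left)
    _ = _ := by rw [hcyl, toReal_half_pow]
end

section
/- Let μ be a non-atomic P-measure on ω: μ is finitely additive, probability, vanishes on points, for every ⊆-decreasing sequence (A_n) there is a pseudointersection A with μ(A) = lim_n μ(A_n), and for every ε > 0 there is a finite partition of ω into sets of measure ≤ ε. Then for every A ⊆ ω and every real α ∈ [0, μ(A)] there exists B ⊆ A with μ(B) = α. -/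
section aux

variable (μ : Set ℕ → ℝ)
    (hadd : ∀ A B : Set ℕ, Disjoint A B → μ (A ∪ B) = μ A + μ B)
    (hnonneg : ∀ A : Set ℕ, 0 ≤ μ A)

include hadd in
lemma aux_empty : μ ∅ = 0 := by
  have := hadd ∅ ∅ (by simp)
  simp at this; linarith

include hadd in
lemma aux_diff {A B : Set ℕ} (h : A ⊆ B) : μ (B \ A) = μ B - μ A := by
  have := hadd A (B \ A) Set.disjoint_sdiff_right
  rw [Set.union_diff_cancel h] at this
  linarith

include hadd hnonneg in
lemma aux_mono {A B : Set ℕ} (h : A ⊆ B) : μ A ≤ μ B := by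
  have := aux_diff μ hadd h
  have := hnonneg (B \ A)
  linarith

include hadd in
lemma aux_finite_null (hpoints : ∀ n : ℕ, μ {n} = 0) {S : Set ℕ} (hS : S.Finite) :
    μ S = 0 := by
  refine Set.Finite.induction_on (motive := fun S _ => μ S = 0) S hS (aux_empty μ hadd) ?_
  intro a s ha _ ih
  have : μ (insert a s) = μ {a} + μ s := by
    rw [show insert a s = {a} ∪ s from rfl]
    exact hadd {a} s (by simpa using ha)
  rw [this, hpoints a, ih]; ring

include hadd hnonneg in
lemma aux_le_of_diff_finite (hpoints : ∀ n : ℕ, μ {n} = 0) {B C : Set ℕ}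
    (h : (B \ C).Finite) : μ B ≤ μ C := by
  have h1 : μ B ≤ μ (C ∪ (B \ C)) :=
    aux_mono μ hadd hnonneg (fun x hx => by by_cases hc : x ∈ C <;> simp [hc, hx])
  rw [hadd C (B \ C) Set.disjoint_sdiff_right, aux_finite_null μ hadd hpoints h] at h1
  linarith

include hadd in
lemma aux_sum {ι : Type} [DecidableEq ι] (Q : ι → Set ℕ)
    (hdisj : Pairwise (Function.onFun Disjoint Q)) (s : Finset ι) :
    μ (⋃ i ∈ s, Q i) = ∑ i ∈ s, μ (Q i) := by
  induction s using Finset.induction_on with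
  | empty => simpa using aux_empty μ hadd
  | @insert a s ha ih =>
    rw [Finset.set_biUnion_insert, hadd _ _ ?_, ih, Finset.sum_insert ha]
    rw [Set.disjoint_iUnion₂_right]
    intro i hi
    exact hdisj (show a ≠ i from fun h => ha (h ▸ hi))

include hadd hnonneg in
lemma aux_greedy
    (hna : ∀ ε : ℝ, 0 < ε → ∃ (N : ℕ) (P : Fin N → Set ℕ),
      (⋃ i, P i) = Set.univ ∧ Pairwise (Function.onFun Disjoint P) ∧ ∀ i, μ (P i) ≤ ε)
    (C : Set ℕ) (t ε : ℝ) (ht0 : 0 ≤ t) (htC : t ≤ μ C) (hε : 0 < ε) :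
    ∃ D, D ⊆ C ∧ t - ε ≤ μ D ∧ μ D ≤ t := by
  obtain ⟨N, P, hcov, hdisj, hsmall⟩ := hna ε hε
  set Q : Fin N → Set ℕ := fun i => P i ∩ C with hQ
  have hQdisj : Pairwise (Function.onFun Disjoint Q) := fun i j hij =>
    (hdisj hij).mono Set.inter_subset_left Set.inter_subset_left
  have htot : ∑ i : Fin N, μ (Q i) = μ C := by
    rw [← aux_sum μ hadd Q hQdisj Finset.univ]
    congr 1
    simp only [Finset.mem_univ, Set.iUnion_true, hQ, ← Set.iUnion_inter, hcov]
    simp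
  set S : Finset (Finset (Fin N)) :=
    Finset.univ.filter (fun s => ∑ i ∈ s, μ (Q i) ≤ t) with hS
  have hSne : S.Nonempty := ⟨∅, by simp [hS, ht0]⟩
  obtain ⟨s, hsS, hsmax⟩ := Finset.exists_max_image S Finset.card hSne
  have hsle : ∑ i ∈ s, μ (Q i) ≤ t := by
    simpa [hS] using (Finset.mem_filter.mp hsS).2
  have hslow : t - ε ≤ ∑ i ∈ s, μ (Q i) := by
    by_contra hcon
    push_neg at hcon
    have hne : s ≠ Finset.univ := by
      rintro rfl
      rw [htot] at hcon
      linarith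
    obtain ⟨i, hi⟩ : ∃ i, i ∉ s := by
      by_contra h; push_neg at h
      exact hne (Finset.eq_univ_iff_forall.mpr h)
    have hQi : μ (Q i) ≤ ε :=
      le_trans (aux_mono μ hadd hnonneg Set.inter_subset_left) (hsmall i)
    have hmem : insert i s ∈ S := by
      simp only [hS, Finset.mem_filter, Finset.mem_univ, true_and]
      rw [Finset.sum_insert hi]
      linarith
    have := hsmax _ hmem
    rw [Finset.card_insert_of_notMem hi] at this
    omega
  refine ⟨⋃ i ∈ s, Q i, Set.iUnion₂_subset (fun i _ => Set.inter_subset_right), ?_, ?_⟩ <;>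
    rw [aux_sum μ hadd Q hQdisj s]
  · exact hslow
  · exact hsle

end aux

theorem stmt12 (μ : Set ℕ → ℝ)
    (hadd : ∀ A B : Set ℕ, Disjoint A B → μ (A ∪ B) = μ A + μ B)
    (hnonneg : ∀ A : Set ℕ, 0 ≤ μ A)
    (hprob : μ Set.univ = 1)
    (hpoints : ∀ n : ℕ, μ {n} = 0)
    (hP : ∀ A : ℕ → Set ℕ, (∀ n, A (n + 1) ⊆ A n) →
      ∃ B : Set ℕ, (∀ n, (B \ A n).Finite) ∧
        Filter.Tendsto (fun n => μ (A n)) Filter.atTop (nhds (μ B)))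
    (hna : ∀ ε : ℝ, 0 < ε → ∃ (N : ℕ) (P : Fin N → Set ℕ),
      (⋃ i, P i) = Set.univ ∧ Pairwise (Function.onFun Disjoint P) ∧ ∀ i, μ (P i) ≤ ε) :
    ∀ (A : Set ℕ) (α : ℝ), α ∈ Set.Icc 0 (μ A) → ∃ B ⊆ A, μ B = α := by
  intro A α hα
  obtain ⟨hα0, hαA⟩ := hα
  -- step lemma
  have step : ∀ ε : ℝ, 0 < ε → ∀ B : Set ℕ, B ⊆ A → μ B ≤ α →
      ∃ B' : Set ℕ, B ⊆ B' ∧ B' ⊆ A ∧ α - ε ≤ μ B' ∧ μ B' ≤ α := by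
    intro ε hε B hBA hBα
    have hdiff : μ (A \ B) = μ A - μ B := aux_diff μ hadd hBA
    obtain ⟨D, hDC, hDlow, hDhigh⟩ := aux_greedy μ hadd hnonneg hna (A \ B)
      (α - μ B) ε (by linarith) (by linarith) hε
    have hdisjBD : Disjoint B D :=
      Set.disjoint_sdiff_right.mono_right hDC
    refine ⟨B ∪ D, Set.subset_union_left, ?_, ?_, ?_⟩
    · exact Set.union_subset hBA (hDC.trans Set.diff_subset)
    · rw [hadd B D hdisjBD]; linarith
    · rw [hadd B D hdisjBD]; linarith
  choose F hF1 hF2 hF3 hF4 using step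
  have hempty : μ ∅ = 0 := aux_empty μ hadd
  -- recursive sequence
  let g : ℕ → {B : Set ℕ // B ⊆ A ∧ μ B ≤ α} := fun n =>
    Nat.rec ⟨∅, Set.empty_subset A, by rw [hempty]; exact hα0⟩
      (fun n p => ⟨F ((1/2)^n) (by positivity) p.1 p.2.1 p.2.2,
        hF2 _ _ _ _ _, hF4 _ _ _ _ _⟩) n
  have hgsub : ∀ n, (g n).1 ⊆ (g (n+1)).1 := fun n => hF1 _ _ _ _ _
  have hglow : ∀ n, α - (1/2)^n ≤ μ (g (n+1)).1 := fun n => hF3 _ _ _ _ _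
  -- tendsto μ (g n) → α
  have hgtend : Filter.Tendsto (fun n => μ (g n).1) Filter.atTop (nhds α) := by
    rw [← Filter.tendsto_add_atTop_iff_nat 1]
    have h0 : Filter.Tendsto (fun n : ℕ => α - (1/2 : ℝ)^n) Filter.atTop (nhds α) := by
      have := tendsto_pow_atTop_nhds_zero_of_lt_one (r := (1/2 : ℝ)) (by norm_num) (by norm_num)
      simpa using (tendsto_const_nhds (x := α)).sub this
    exact tendsto_of_tendsto_of_tendsto_of_le_of_le h0 tendsto_const_nhds
      (fun n => hglow n) (fun n => (g (n+1)).2.2)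
  -- decreasing sequence
  set An : ℕ → Set ℕ := fun n => A \ (g n).1 with hAn
  have hAdec : ∀ n, An (n+1) ⊆ An n := fun n =>
    Set.diff_subset_diff_right (hgsub n)
  obtain ⟨B, hBfin, hBtend⟩ := hP An hAdec
  have hAntend : Filter.Tendsto (fun n => μ (An n)) Filter.atTop (nhds (μ A - α)) := by
    have heq : ∀ n, μ (An n) = μ A - μ (g n).1 := fun n => aux_diff μ hadd (g n).2.1
    simp only [heq]
    exact (tendsto_const_nhds (x := μ A)).sub hgtend
  have hμB : μ B = μ A - α := tendsto_nhds_unique hBtend hAntend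
  -- trim B to A
  have hfin0 : (B \ A).Finite := by
    have := hBfin 0
    have h0 : An 0 = A := by
      show A \ (g 0).1 = A
      rw [show (g 0).1 = ∅ from rfl, Set.diff_empty]
    rwa [h0] at this
  set B' : Set ℕ := B ∩ A with hB'
  have hB'B : μ B' = μ B := by
    have h1 : μ B' ≤ μ B := aux_mono μ hadd hnonneg Set.inter_subset_left
    have h2 : μ B ≤ μ B' := by
      apply aux_le_of_diff_finite μ hadd hnonneg hpoints
      have : B \ B' = B \ A := by
        ext x; simp [hB']
      rw [this]; exact hfin0
    linarith
  refine ⟨A \ B', Set.diff_subset, ?_⟩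
  rw [aux_diff μ hadd (Set.inter_subset_right), hB'B, hμB]
  ring
end

section
/- Let U be a P-point ultrafilter on ω and define ν : ℘(ω) → [0,1] by ν(A) = lim_{n→U} |A ∩ {0,…,n−1}| / n. Then ν is a finitely additive probability measure on ω that vanishes on points, extends the asymptotic density on all sets for which the density exists, and is a non-atomic P-measure. -/
open Filter Set

noncomputable def dd (A : Set ℕ) (n : ℕ) : ℝ := ((A ∩ Set.Iio n).ncard : ℝ) / n

lemma finter (A : Set ℕ) (n : ℕ) : (A ∩ Set.Iio n).Finite :=
  (Set.finite_Iio n).inter_of_right A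

lemma ncard_Iio' (n : ℕ) : (Set.Iio n).ncard = n := by
  rw [← Finset.coe_range, Set.ncard_coe_finset]; simp

lemma dd_nonneg (A : Set ℕ) (n : ℕ) : 0 ≤ dd A n := by unfold dd; positivity

lemma dd_le_one (A : Set ℕ) (n : ℕ) : dd A n ≤ 1 := by
  unfold dd
  rcases Nat.eq_zero_or_pos n with h | h
  · simp [h]
  · rw [div_le_one (by positivity)]
    exact_mod_cast (Set.ncard_le_ncard (Set.inter_subset_right) (Set.finite_Iio n)).trans_eq
      (ncard_Iio' n)

-- splitting counts
lemma count_split (X : Set ℕ) (a b : ℕ) (hab : a ≤ b) :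
    ((X ∩ Set.Iio b).ncard : ℝ) = (X ∩ Set.Iio a).ncard + (X ∩ Set.Ico a b).ncard := by
  have hdisj : Disjoint (X ∩ Set.Iio a) (X ∩ Set.Ico a b) := by
    rw [Set.disjoint_left]
    rintro x ⟨-, hx1⟩ ⟨-, hx2⟩
    exact absurd hx2.1 (not_le.mpr hx1)
  have hun : X ∩ Set.Iio b = (X ∩ Set.Iio a) ∪ (X ∩ Set.Ico a b) := by
    rw [← Set.inter_union_distrib_left, Set.Iio_union_Ico_eq_Iio hab]
  rw [hun, Set.ncard_union_eq hdisj (finter X a) ((Set.finite_Ico a b).inter_of_right X)]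
  push_cast
  ring

lemma dd_mul (X : Set ℕ) (n : ℕ) (hn : 0 < n) :
    dd X n * n = ((X ∩ Set.Iio n).ncard : ℝ) := by
  unfold dd
  have : (n:ℝ) ≠ 0 := by exact_mod_cast hn.ne'
  field_simp

theorem pmeasure_key (U : Ultrafilter ℕ) (hfree : ∀ A : Set ℕ, A.Finite → A ∉ U)
    (hpp : ∀ A : ℕ → Set ℕ, (∀ n, A n ∈ U) → ∃ B ∈ U, ∀ n, (B \ A n).Finite)
    (ν : Set ℕ → ℝ)
    (hν : ∀ A : Set ℕ, Filter.Tendsto (dd A) (U : Filter ℕ) (nhds (ν A)))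
    (A : ℕ → Set ℕ) (hmono : Antitone A) (L : ℝ)
    (hL0 : 0 ≤ L) (hL2 : L ≤ 2) (hLd : ∀ k, |ν (A k) - L| ≤ (2:ℝ)⁻¹ ^ k) :
    ∃ B : Set ℕ, (∀ n, (B \ A n).Finite) ∧ ν B = L := by
  classical
  -- the good sets
  set Ek : ℕ → Set ℕ := fun k => {n | |dd (A k) n - ν (A k)| < (2:ℝ)⁻¹ ^ k} with hEk_def
  have hEkU : ∀ k, Ek k ∈ U := by
    intro k
    have := Metric.tendsto_nhds.mp (hν (A k)) ((2:ℝ)⁻¹ ^ k) (by positivity)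
    simpa [Real.dist_eq, hEk_def, Filter.Eventually] using this
  obtain ⟨E, hEU, hEfin⟩ := hpp Ek hEkU
  choose bb hbb using fun k => (hEfin k).bddAbove
  have hEinf : E.Infinite := fun h => hfree E h hEU
  have hstep : ∀ c : ℕ, ∃ n, n ∈ E ∧ c < n := fun c => by
    obtain ⟨x, hx, hcx⟩ := hEinf.exists_gt c
    exact ⟨x, hx, hcx⟩
  choose f hfE hfgt using hstep
  -- the scale sequence
  set m : ℕ → ℕ := fun k =>
    Nat.rec (f (bb 0)) (fun k mk => f (max (bb (k+1)) (2 ^ k * mk))) k with hm_def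
  have hmsucc : ∀ k, m (k+1) = f (max (bb (k+1)) (2 ^ k * m k)) := fun k => rfl
  have hmE : ∀ k, m k ∈ E := by
    intro k
    cases k with
    | zero => exact hfE _
    | succ k => rw [hmsucc]; exact hfE _
  have hmbb : ∀ k, bb k < m k := by
    intro k
    cases k with
    | zero => exact hfgt _
    | succ k => exact lt_of_le_of_lt (le_max_left _ _) (by rw [hmsucc]; exact hfgt _)
  have hmgrow : ∀ k, 2 ^ k * m k < m (k+1) := fun k =>
    lt_of_le_of_lt (le_max_right _ _) (by rw [hmsucc]; exact hfgt _)
  have hmpos : ∀ k, 0 < m k := fun k => (Nat.zero_le (bb k)).trans_lt (hmbb k)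
  have hmlt : ∀ k, m k < m (k+1) := fun k =>
    lt_of_le_of_lt (Nat.le_mul_of_pos_left _ (pow_pos (by norm_num) k)) (hmgrow k)
  have hmmono : StrictMono m := strictMono_nat_of_lt_succ hmlt
  -- membership in Ek
  have hinEk : ∀ k n, n ∈ E → m k ≤ n → |dd (A k) n - ν (A k)| < (2:ℝ)⁻¹ ^ k := by
    intro k n hnE hge
    by_contra h
    have hx : n ∈ E \ Ek k := ⟨hnE, fun hc => h hc⟩
    have h1 := hbb k hx
    have h2 := hmbb k
    omega
  -- the set B
  set B : Set ℕ := ⋃ k, A k ∩ Set.Ico (m k) (m (k+1)) with hB_def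
  have hBsub : ∀ n, B \ A n ⊆ Set.Iio (m n) := by
    intro n x hx
    obtain ⟨hxB, hxA⟩ := hx
    rw [hB_def, Set.mem_iUnion] at hxB
    obtain ⟨j, hj1, hj2⟩ := hxB
    by_contra h
    simp only [Set.mem_Iio, not_lt] at h
    have hjn : n ≤ j := by
      by_contra hc
      push_neg at hc
      have h3 : m (j+1) ≤ m n := hmmono.monotone hc
      have h4 := hj2.2
      omega
    exact hxA (hmono hjn hj1)
  -- segment identity
  have hBseg : ∀ k n, m k ≤ n → n ≤ m (k+1) → B ∩ Set.Ico (m k) n = A k ∩ Set.Ico (m k) n := by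
    intro k n h1 h2
    ext x
    constructor
    · rintro ⟨hxB, hx2⟩
      rw [hB_def, Set.mem_iUnion] at hxB
      obtain ⟨j, hj1, hj2⟩ := hxB
      have hjk : j = k := by
        rcases lt_trichotomy j k with h | h | h
        · have h3 : m (j+1) ≤ m k := hmmono.monotone h
          have h4 := hj2.2; have h5 := hx2.1; omega
        · exact h
        · have h3 : m (k+1) ≤ m j := hmmono.monotone h
          have h4 := hj2.1; have h5 := hx2.2; omega
      rw [hjk] at hj1
      exact ⟨hj1, hx2⟩
    · rintro ⟨hxA, hx2⟩
      refine ⟨?_, hx2⟩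
      rw [hB_def, Set.mem_iUnion]
      exact ⟨k, hxA, hx2.1, lt_of_lt_of_le hx2.2 h2⟩
  -- dd comparison
  have hcompare : ∀ k n, m k ≤ n → n ≤ m (k+1) →
      dd B n - dd (A k) n = (dd B (m k) - dd (A k) (m k)) * ((m k : ℝ) / n) := by
    intro k n h1 h2
    have hn0 : 0 < n := lt_of_lt_of_le (hmpos k) h1
    have hn0' : (0:ℝ) < n := by exact_mod_cast hn0
    have hmk0 : (0:ℝ) < m k := by exact_mod_cast hmpos k
    have e1 : ((B ∩ Set.Iio n).ncard : ℝ)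
        = (B ∩ Set.Iio (m k)).ncard + ((A k ∩ Set.Ico (m k) n).ncard : ℝ) := by
      rw [count_split B (m k) n h1, hBseg k n h1 h2]
    have e2 : ((A k ∩ Set.Iio n).ncard : ℝ)
        = (A k ∩ Set.Iio (m k)).ncard + ((A k ∩ Set.Ico (m k) n).ncard : ℝ) :=
      count_split (A k) (m k) n h1
    have e3 : dd B n * n - dd (A k) n * n
        = dd B (m k) * m k - dd (A k) (m k) * m k := by
      rw [dd_mul B n hn0, dd_mul (A k) n hn0, dd_mul B (m k) (hmpos k),
        dd_mul (A k) (m k) (hmpos k), e1, e2]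
      ring
    have hne : (n:ℝ) ≠ 0 := hn0'.ne'
    field_simp
    linarith [e3]
  -- claim 1: main estimate on [m k, m (k+1)] ∩ E
  have claim1 : ∀ k n, n ∈ E → m k ≤ n → n ≤ m (k+1) →
      |dd B n - L| ≤ 2 * (2:ℝ)⁻¹ ^ k
        + ((m k : ℝ) / n) * (|dd B (m k) - L| + 2 * (2:ℝ)⁻¹ ^ k) := by
    intro k n hnE h1 h2
    have hn0 : 0 < n := lt_of_lt_of_le (hmpos k) h1
    have hn0' : (0:ℝ) < n := by exact_mod_cast hn0
    have hq0 : (0:ℝ) ≤ (2:ℝ)⁻¹ ^ k := by positivity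
    have hfrac0 : (0:ℝ) ≤ (m k : ℝ) / n := by positivity
    have ha : |dd (A k) n - ν (A k)| < (2:ℝ)⁻¹ ^ k := hinEk k n hnE h1
    have hb : |dd (A k) (m k) - ν (A k)| < (2:ℝ)⁻¹ ^ k := hinEk k (m k) (hmE k) le_rfl
    have hc : |ν (A k) - L| ≤ (2:ℝ)⁻¹ ^ k := hLd k
    have t1 : |dd B n - L| ≤ |dd B n - dd (A k) n| + |dd (A k) n - L| := abs_sub_le _ _ _
    have t2 : |dd (A k) n - L| ≤ |dd (A k) n - ν (A k)| + |ν (A k) - L| := abs_sub_le _ _ _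
    have t3 : |dd B (m k) - dd (A k) (m k)|
        ≤ |dd B (m k) - L| + |L - dd (A k) (m k)| := abs_sub_le _ _ _
    have t4 : |L - dd (A k) (m k)| ≤ |L - ν (A k)| + |ν (A k) - dd (A k) (m k)| :=
      abs_sub_le _ _ _
    rw [abs_sub_comm L (ν (A k))] at t4
    rw [abs_sub_comm (ν (A k)) (dd (A k) (m k))] at t4
    have t5 : |dd B n - dd (A k) n|
        = |dd B (m k) - dd (A k) (m k)| * ((m k : ℝ) / n) := by
      rw [hcompare k n h1 h2, abs_mul, abs_of_nonneg hfrac0]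
    have t6 : |dd B (m k) - dd (A k) (m k)| * ((m k : ℝ) / n)
        ≤ (|dd B (m k) - L| + 2 * (2:ℝ)⁻¹ ^ k) * ((m k : ℝ) / n) := by
      apply mul_le_mul_of_nonneg_right _ hfrac0
      linarith
    nlinarith [t1, t2, t5, t6]
  -- bound on the checkpoint error
  have wbound : ∀ k, |dd B (m k) - L| ≤ 2 := by
    intro k
    have h1 := dd_nonneg B (m k)
    have h2 := dd_le_one B (m k)
    rw [abs_le]; constructor <;> linarith
  have claim2 : ∀ k, |dd B (m (k+1)) - L| ≤ 12 * (2:ℝ)⁻¹ ^ (k+1) := by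
    intro k
    have hq0 : (0:ℝ) ≤ (2:ℝ)⁻¹ ^ k := by positivity
    have hq1 : (2:ℝ)⁻¹ ^ k ≤ 1 := pow_le_one₀ (by norm_num) (by norm_num)
    have hmk0 : (0:ℝ) < m k := by exact_mod_cast hmpos k
    have hmk10 : (0:ℝ) < m (k+1) := by exact_mod_cast hmpos (k+1)
    have hr : ((m k : ℝ)) / (m (k+1)) ≤ (2:ℝ)⁻¹ ^ k := by
      have hgrow : ((2:ℝ) ^ k * m k) ≤ m (k+1) := by exact_mod_cast (hmgrow k).le
      have h1 : ((m k : ℝ)) / (m (k+1)) ≤ (m k : ℝ) / ((2:ℝ) ^ k * m k) :=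
        div_le_div_of_nonneg_left hmk0.le (by positivity) hgrow
      have h2 : (m k : ℝ) / ((2:ℝ) ^ k * m k) = (2:ℝ)⁻¹ ^ k := by
        rw [mul_comm, ← div_div, div_self (ne_of_gt hmk0), one_div, ← inv_pow]
      linarith [h1, h2.le]
    have h := claim1 k (m (k+1)) (hmE (k+1)) (hmlt k).le le_rfl
    have hfrac0 : (0:ℝ) ≤ (m k : ℝ) / (m (k+1)) := by positivity
    have t : ((m k : ℝ) / (m (k+1))) * (|dd B (m k) - L| + 2 * (2:ℝ)⁻¹ ^ k)
        ≤ (2:ℝ)⁻¹ ^ k * (2 + 2 * (2:ℝ)⁻¹ ^ k) := by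
      apply mul_le_mul hr _ (by positivity) hq0
      linarith [wbound k]
    have hpow : (2:ℝ)⁻¹ ^ (k+1) = (2:ℝ)⁻¹ ^ k * 2⁻¹ := pow_succ _ _
    nlinarith [h, t, hq0, hq1]
  -- final estimate
  have final : ∀ K n, n ∈ E → m (K+1) ≤ n → |dd B n - L| ≤ 16 * (2:ℝ)⁻¹ ^ (K+1) := by
    intro K n hnE hKn
    set j := Nat.findGreatest (fun j => m j ≤ n) n with hj_def
    have hK1n : K + 1 ≤ n := le_trans (hmmono.le_apply) hKn
    have hjK : K + 1 ≤ j := Nat.le_findGreatest (P := fun j => m j ≤ n) (n := n) hK1n hKn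
    have hjn : m j ≤ n := Nat.findGreatest_spec (P := fun j => m j ≤ n) (n := n) hK1n hKn
    have hnj1 : n < m (j+1) := by
      rcases le_or_gt (j+1) n with h | h
      · by_contra hcon
        push_neg at hcon
        exact Nat.findGreatest_is_greatest (Nat.lt_succ_self j) h hcon
      · exact lt_of_lt_of_le h (hmmono.le_apply)
    obtain ⟨k, hk⟩ : ∃ k, j = k + 1 := ⟨j - 1, by omega⟩
    have h := claim1 j n hnE hjn hnj1.le
    have hn0 : 0 < n := lt_of_lt_of_le (hmpos j) hjn
    have hn0' : (0:ℝ) < n := by exact_mod_cast hn0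
    have hfrac1 : ((m j : ℝ)) / n ≤ 1 := by
      rw [div_le_one hn0']
      exact_mod_cast hjn
    have hfrac0 : (0:ℝ) ≤ (m j : ℝ) / n := by positivity
    have hw : |dd B (m j) - L| ≤ 12 * (2:ℝ)⁻¹ ^ j := by rw [hk]; exact claim2 k
    have hq0 : (0:ℝ) ≤ (2:ℝ)⁻¹ ^ j := by positivity
    have t : ((m j : ℝ) / n) * (|dd B (m j) - L| + 2 * (2:ℝ)⁻¹ ^ j)
        ≤ 14 * (2:ℝ)⁻¹ ^ j := by
      calc ((m j : ℝ) / n) * (|dd B (m j) - L| + 2 * (2:ℝ)⁻¹ ^ j)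
          ≤ 1 * (|dd B (m j) - L| + 2 * (2:ℝ)⁻¹ ^ j) :=
            mul_le_mul_of_nonneg_right hfrac1 (by positivity)
        _ ≤ 14 * (2:ℝ)⁻¹ ^ j := by linarith
    have hmonoq : (2:ℝ)⁻¹ ^ j ≤ (2:ℝ)⁻¹ ^ (K+1) :=
      pow_le_pow_of_le_one (by norm_num) (by norm_num) hjK
    linarith [h, t]
  -- conclusion
  refine ⟨B, fun n => Set.Finite.subset (Set.finite_Iio (m n)) (hBsub n), ?_⟩
  refine tendsto_nhds_unique (hν B) ?_
  rw [Metric.tendsto_nhds]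
  intro ε hε
  obtain ⟨K, hK⟩ : ∃ K : ℕ, 16 * (2:ℝ)⁻¹ ^ (K+1) < ε := by
    obtain ⟨K, hK⟩ := exists_pow_lt_of_lt_one (x := ε / 16) (y := (2:ℝ)⁻¹)
      (by positivity) (by norm_num)
    refine ⟨K, ?_⟩
    have h2 : (2:ℝ)⁻¹ ^ (K+1) ≤ (2:ℝ)⁻¹ ^ K :=
      pow_le_pow_of_le_one (by norm_num) (by norm_num) (Nat.le_succ K)
    calc 16 * (2:ℝ)⁻¹ ^ (K+1) ≤ 16 * (2:ℝ)⁻¹ ^ K := by linarith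
      _ < 16 * (ε / 16) := by linarith
      _ = ε := by ring
  have htail : {n : ℕ | m (K+1) ≤ n} ∈ U := by
    rw [← Ultrafilter.compl_notMem_iff]
    intro hcon
    apply hfree {n : ℕ | m (K+1) ≤ n}ᶜ _ hcon
    apply Set.Finite.subset (Set.finite_Iio (m (K+1)))
    intro x hx
    simpa using hx
  have hmem : {n : ℕ | n ∈ E ∧ m (K+1) ≤ n} ∈ U := by
    have := Filter.inter_mem hEU htail
    simpa [Set.inter_def] using this
  apply Filter.mem_of_superset hmem
  intro n hn
  simp only [Set.mem_setOf_eq]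
  rw [Real.dist_eq]
  exact lt_of_le_of_lt (final K n hn.1 hn.2) hK

lemma res_upper (N i n : ℕ) (hN : 0 < N) :
    ({m : ℕ | m % N = i} ∩ Set.Iio n).ncard ≤ n / N + 1 := by
  have := Set.ncard_le_ncard_of_injOn (fun m => m / N)
    (s := {m : ℕ | m % N = i} ∩ Set.Iio n) (t := Set.Iio (n / N + 1))
    (fun m hm => by
      simp only [Set.mem_Iio]
      exact lt_of_le_of_lt (Nat.div_le_div_right hm.2.le) (Nat.lt_succ_self _))
    (fun a ha b hb hab => by
      simp only [Set.mem_inter_iff, Set.mem_setOf_eq] at ha hb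
      simp only at hab
      calc a = N * (a / N) + a % N := (Nat.div_add_mod a N).symm
        _ = N * (b / N) + b % N := by rw [hab, ha.1, hb.1]
        _ = b := Nat.div_add_mod b N)
    (Set.finite_Iio _)
  simpa [ncard_Iio'] using this

lemma res_lower (N i n : ℕ) (hN : 0 < N) (hi : i < N) :
    n / N ≤ ({m : ℕ | m % N = i} ∩ Set.Iio n).ncard := by
  have := Set.ncard_le_ncard_of_injOn (fun j => j * N + i)
    (s := Set.Iio (n / N)) (t := {m : ℕ | m % N = i} ∩ Set.Iio n)
    (fun j hj => by
      simp only [Set.mem_Iio] at hj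
      constructor
      · show (j * N + i) % N = i
        rw [Nat.add_comm, Nat.add_mul_mod_self_right, Nat.mod_eq_of_lt hi]
      · simp only [Set.mem_Iio]
        have h1 : (j + 1) * N ≤ (n / N) * N := Nat.mul_le_mul_right N hj
        have h2 : (n / N) * N ≤ n := Nat.div_mul_le_self n N
        have h3 : j * N + i < (j + 1) * N := by
          have := Nat.add_lt_add_left hi (j * N)
          simpa [Nat.succ_mul] using this
        exact lt_of_lt_of_le h3 (le_trans h1 h2))
    (fun a _ b _ hab => by
      simp only at hab
      exact Nat.eq_of_mul_eq_mul_right hN (by omega))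
    ((Set.finite_Iio n).inter_of_right _)
  simpa [ncard_Iio'] using this

lemma res_tendsto (N i : ℕ) (hN : 0 < N) (hi : i < N) :
    Filter.Tendsto (fun n => (({m : ℕ | m % N = i} ∩ Set.Iio n).ncard : ℝ) / n)
      Filter.atTop (nhds (1 / N)) := by
  have hlow : Filter.Tendsto (fun n : ℕ => 1/(N:ℝ) - 1/n) Filter.atTop (nhds (1/N)) := by
    simpa using (tendsto_const_nhds (x := 1/(N:ℝ)) (f := Filter.atTop (α := ℕ))).sub
      tendsto_one_div_atTop_nhds_zero_nat
  have hhigh : Filter.Tendsto (fun n : ℕ => 1/(N:ℝ) + 1/n) Filter.atTop (nhds (1/N)) := by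
    simpa using (tendsto_const_nhds (x := 1/(N:ℝ)) (f := Filter.atTop (α := ℕ))).add
      tendsto_one_div_atTop_nhds_zero_nat
  refine tendsto_of_tendsto_of_tendsto_of_le_of_le' hlow hhigh ?_ ?_
  · filter_upwards [Filter.eventually_ge_atTop 1] with n hn
    have hn' : (0:ℝ) < n := by exact_mod_cast hn
    have h1 : ((n / N : ℕ) : ℝ) ≤ (({m : ℕ | m % N = i} ∩ Set.Iio n).ncard : ℝ) := by
      exact_mod_cast res_lower N i n hN hi
    have h2 : (n:ℝ)/N - 1 ≤ ((n / N : ℕ) : ℝ) := by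
      have h3 : n < (n / N + 1) * N := by
        have hm := Nat.div_add_mod n N
        have hr := Nat.mod_lt n hN
        calc n = N * (n / N) + n % N := hm.symm
          _ < N * (n / N) + N := Nat.add_lt_add_left hr _
          _ = (n / N + 1) * N := by ring
      have h4 : (n:ℝ) < (((n / N : ℕ) : ℝ) + 1) * N := by exact_mod_cast h3
      rw [sub_le_iff_le_add, div_le_iff₀ (by exact_mod_cast hN)]
      nlinarith
    have key : 1/(N:ℝ) - 1/n = ((n:ℝ)/N - 1)/n := by
      field_simp
    rw [key]
    exact div_le_div_of_nonneg_right (h2.trans h1) (by positivity)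
  · filter_upwards [Filter.eventually_ge_atTop 1] with n hn
    have hn' : (0:ℝ) < n := by exact_mod_cast hn
    have h1 : (({m : ℕ | m % N = i} ∩ Set.Iio n).ncard : ℝ) ≤ ((n / N : ℕ) : ℝ) + 1 := by
      exact_mod_cast res_upper N i n hN
    have h2 : ((n / N : ℕ) : ℝ) ≤ (n:ℝ)/N := Nat.cast_div_le
    have key : 1/(N:ℝ) + 1/n = ((n:ℝ)/N + 1)/n := by
      field_simp
    rw [key]
    exact div_le_div_of_nonneg_right (h1.trans (by linarith)) (by positivity)

theorem stmt14 (U : Ultrafilter ℕ) (hfree : ∀ A : Set ℕ, A.Finite → A ∉ U)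
    (hpp : ∀ A : ℕ → Set ℕ, (∀ n, A n ∈ U) → ∃ B ∈ U, ∀ n, (B \ A n).Finite)
    (ν : Set ℕ → ℝ)
    (hν : ∀ A : Set ℕ, Filter.Tendsto
      (fun n => ((A ∩ Set.Iio n).ncard : ℝ) / n) (U : Filter ℕ) (nhds (ν A))) :
    (∀ A B : Set ℕ, Disjoint A B → ν (A ∪ B) = ν A + ν B) ∧
    (∀ A : Set ℕ, 0 ≤ ν A) ∧
    ν Set.univ = 1 ∧
    (∀ n : ℕ, ν {n} = 0) ∧
    (∀ (A : Set ℕ) (d : ℝ),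
      Filter.Tendsto (fun n => ((A ∩ Set.Iio n).ncard : ℝ) / n) Filter.atTop (nhds d) →
      ν A = d) ∧
    (∀ ε : ℝ, 0 < ε → ∃ (N : ℕ) (P : Fin N → Set ℕ),
      (⋃ i, P i) = Set.univ ∧ Pairwise (Function.onFun Disjoint P) ∧ ∀ i, ν (P i) ≤ ε) ∧
    (∀ A : ℕ → Set ℕ, (∀ n, A (n + 1) ⊆ A n) →
      ∃ B : Set ℕ, (∀ n, (B \ A n).Finite) ∧
        Filter.Tendsto (fun n => ν (A n)) Filter.atTop (nhds (ν B))) := by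
  classical
  have hν' : ∀ A : Set ℕ, Filter.Tendsto (dd A) (U : Filter ℕ) (nhds (ν A)) := hν
  have hle : (U : Filter ℕ) ≤ Filter.atTop := by
    rw [← Nat.cofinite_eq_atTop]
    intro s hs
    exact (Ultrafilter.compl_notMem_iff).1 (hfree _ hs)
  have hnn : ∀ A : Set ℕ, 0 ≤ ν A := fun A =>
    ge_of_tendsto (hν' A) (Filter.Eventually.of_forall (dd_nonneg A))
  have hub : ∀ A : Set ℕ, ν A ≤ 1 := fun A =>
    le_of_tendsto (hν' A) (Filter.Eventually.of_forall (dd_le_one A))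
  have hmononu : ∀ A B : Set ℕ, A ⊆ B → ν A ≤ ν B := by
    intro A B h
    refine le_of_tendsto_of_tendsto' (hν' A) (hν' B) ?_
    intro n
    unfold dd
    rcases Nat.eq_zero_or_pos n with h0 | h0
    · simp [h0]
    · have hc : (A ∩ Set.Iio n).ncard ≤ (B ∩ Set.Iio n).ncard :=
        Set.ncard_le_ncard (Set.inter_subset_inter_left _ h) (finter B n)
      exact div_le_div_of_nonneg_right (by exact_mod_cast hc) (by positivity)
  refine ⟨?_, hnn, ?_, ?_, ?_, ?_, ?_⟩
  -- additivity
  · intro A B hd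
    refine tendsto_nhds_unique (hν (A ∪ B)) ?_
    have key : ∀ n : ℕ, (((A ∪ B) ∩ Set.Iio n).ncard : ℝ) / n
        = ((A ∩ Set.Iio n).ncard : ℝ) / n + ((B ∩ Set.Iio n).ncard : ℝ) / n := by
      intro n
      rw [← add_div]
      congr 1
      rw [Set.union_inter_distrib_right]
      have := Set.ncard_union_eq (hd.mono inf_le_left inf_le_left)
        ((Set.finite_Iio n).inter_of_right A) ((Set.finite_Iio n).inter_of_right B)
      exact_mod_cast this
    simp_rw [key]
    exact ((hν A).add (hν B))
  -- univ
  · refine tendsto_nhds_unique (hν Set.univ) ?_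
    refine Filter.Tendsto.mono_left ?_ hle
    have : ∀ᶠ n : ℕ in Filter.atTop, ((Set.univ ∩ Set.Iio n).ncard : ℝ) / n = 1 := by
      filter_upwards [Filter.eventually_gt_atTop 0] with n hn
      rw [Set.univ_inter, ncard_Iio']
      field_simp
    exact Filter.Tendsto.congr' (this.mono fun n h => h.symm) tendsto_const_nhds
  -- singletons
  · intro k
    refine tendsto_nhds_unique (hν {k}) ?_
    refine Filter.Tendsto.mono_left ?_ hle
    have h1 : ∀ n : ℕ, (({k} ∩ Set.Iio n : Set ℕ).ncard : ℝ) / n ≤ 1 / n := by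
      intro n
      have hc : (({k} ∩ Set.Iio n : Set ℕ).ncard : ℝ) ≤ 1 := by
        exact_mod_cast (Set.ncard_le_ncard Set.inter_subset_left (Set.finite_singleton k)).trans
          (by simp)
      exact div_le_div_of_nonneg_right hc (by positivity)
    have h0 : ∀ n : ℕ, 0 ≤ (({k} ∩ Set.Iio n : Set ℕ).ncard : ℝ) / n := fun n => by positivity
    exact squeeze_zero h0 h1 tendsto_one_div_atTop_nhds_zero_nat
  -- density extension
  · intro A d hd
    exact tendsto_nhds_unique (hν A) (hd.mono_left hle)
  -- non-atomicity
  · intro ε hε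
    set N : ℕ := max 1 ⌈1/ε⌉₊ with hN_def
    have hN : 0 < N := lt_of_lt_of_le one_pos (le_max_left _ _)
    have hN' : (0:ℝ) < N := by exact_mod_cast hN
    have hNε : 1/ε ≤ (N:ℝ) := by
      calc 1/ε ≤ (⌈1/ε⌉₊ : ℝ) := Nat.le_ceil _
        _ ≤ (N:ℝ) := by exact_mod_cast le_max_right 1 ⌈1/ε⌉₊
    have hinv : 1/(N:ℝ) ≤ ε := by
      rw [div_le_iff₀ hN']
      rw [div_le_iff₀ hε] at hNε
      linarith
    refine ⟨N, fun i => {m | m % N = i.val}, ?_, ?_, ?_⟩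
    · ext x
      simp only [Set.mem_iUnion, Set.mem_setOf_eq, Set.mem_univ, iff_true]
      exact ⟨⟨x % N, Nat.mod_lt x hN⟩, rfl⟩
    · intro i j hij
      rw [Function.onFun, Set.disjoint_left]
      intro x hx1 hx2
      exact hij (Fin.ext (hx1.symm.trans hx2))
    · intro i
      have heq : ν {m | m % N = i.val} = 1/(N:ℝ) :=
        tendsto_nhds_unique (hν _) ((res_tendsto N i.val hN i.isLt).mono_left hle)
      rw [heq]
      exact hinv
  -- P-measure
  · intro A hA
    have hAmono : Antitone A := antitone_nat_of_succ_le hA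
    have hνA_anti : Antitone (fun n => ν (A n)) := fun i j h => hmononu _ _ (hAmono h)
    have hbdd : BddBelow (Set.range fun n => ν (A n)) :=
      ⟨0, fun x ⟨n, hn⟩ => hn ▸ hnn (A n)⟩
    set L : ℝ := ⨅ n, ν (A n) with hL_def
    have hLtend : Filter.Tendsto (fun n => ν (A n)) Filter.atTop (nhds L) :=
      tendsto_atTop_ciInf hνA_anti hbdd
    have hL0 : 0 ≤ L := ge_of_tendsto hLtend (Filter.Eventually.of_forall fun n => hnn (A n))
    have hL2 : L ≤ 2 :=
      le_of_tendsto hLtend (Filter.Eventually.of_forall fun n => (hub (A n)).trans (by norm_num))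
    -- extract a fast subsequence
    have hex : ∀ k : ℕ, ∃ M : ℕ, ∀ n ≥ M, |ν (A n) - L| ≤ (2:ℝ)⁻¹ ^ k := by
      intro k
      have := Metric.tendsto_atTop.mp hLtend ((2:ℝ)⁻¹ ^ k) (by positivity)
      obtain ⟨M, hM⟩ := this
      exact ⟨M, fun n hn => by rw [← Real.dist_eq]; exact (hM n hn).le⟩
    choose Mf hMf using hex
    set φ : ℕ → ℕ := fun k => Nat.rec (Mf 0) (fun k p => max (Mf (k+1)) (p+1)) k with hφ_def
    have hφsucc : ∀ k, φ (k+1) = max (Mf (k+1)) (φ k + 1) := fun k => rfl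
    have hφM : ∀ k, Mf k ≤ φ k := by
      intro k
      cases k with
      | zero => exact le_rfl
      | succ k => rw [hφsucc]; exact le_max_left _ _
    have hφlt : ∀ k, φ k < φ (k+1) := by
      intro k
      rw [hφsucc]
      exact lt_of_lt_of_le (Nat.lt_succ_self _) (le_max_right _ _)
    have hφmono : StrictMono φ := strictMono_nat_of_lt_succ hφlt
    have hLd : ∀ k, |ν ((A ∘ φ) k) - L| ≤ (2:ℝ)⁻¹ ^ k := fun k =>
      hMf k (φ k) (hφM k)
    obtain ⟨B, hBfin, hBL⟩ := pmeasure_key U hfree hpp ν hν' (A ∘ φ)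
      (hAmono.comp_monotone hφmono.monotone) L hL0 hL2 hLd
    refine ⟨B, ?_, ?_⟩
    · intro n
      refine Set.Finite.subset (hBfin n) (Set.diff_subset_diff_right ?_)
      exact hAmono (hφmono.le_apply)
    · rw [hBL]
      exact hLtend
end

section
/- Let U be a nonprincipal ultrafilter on ω with the property that for every probability space (Ω, Σ, λ) and every sequence (P_k) of measurable sets with lim_{k→U} λ(P_k) = 0 there exists X ∈ U with λ(⋂_{k∈X} ⋃_{i∈X,i>k} P_i) = 0. Then U is semi-selective: for every sequence (a_n) ∈ [0,1]^ω with lim_{n→U} a_n = 0 there exists X ∈ U with Σ_{n∈X} a_n < ∞. -/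
open MeasureTheory
open scoped ENNReal NNReal

noncomputable section BCAux

open Filter ProbabilityTheory TopologicalSpace

/-- The compact group `∏ k, ZMod-like (Fin (2^k))` carrying our product Haar measure. -/
abbrev BCG : Type := ∀ k : ℕ, Fin (2 ^ k)

/-- Haar probability measure on `BCG`. -/
noncomputable def bcHaar : Measure BCG := Measure.addHaarMeasure ⊤

instance : IsProbabilityMeasure bcHaar :=
  ⟨by simpa [bcHaar] using Measure.addHaarMeasure_self (K₀ := (⊤ : PositiveCompacts BCG))⟩

instance : bcHaar.IsAddLeftInvariant := by
  unfold bcHaar; infer_instance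

/-- The master computation: cylinder sets have product measure. -/
lemma bc_master (A : ∀ k : ℕ, Finset (Fin (2 ^ k))) (S : Finset ℕ) :
    bcHaar {ω : BCG | ∀ k ∈ S, ω k ∈ A k}
      = ∏ k ∈ S, (((A k).card : ℝ≥0∞) * ((2 ^ k : ℝ≥0∞))⁻¹) := by
  classical
  set π : BCG → (∀ k : S, Fin (2 ^ (k : ℕ))) := fun ω k => ω k with hπdef
  have hπ : Measurable π := measurable_pi_lambda _ fun k => measurable_pi_apply _
  set ν : Measure (∀ k : S, Fin (2 ^ (k : ℕ))) := bcHaar.map π with hν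
  have hprob : IsProbabilityMeasure ν := Measure.isProbabilityMeasure_map hπ.aemeasurable
  have hsingle : ∀ v, ν {v} = ν {0} := by
    intro v
    have hext : ∀ w : (∀ k : S, Fin (2 ^ (k : ℕ))), ν {w} = bcHaar (π ⁻¹' {w}) := fun w =>
      Measure.map_apply hπ (measurableSet_singleton w)
    rw [hext, hext]
    set g : BCG := fun k => if h : k ∈ S then v ⟨k, h⟩ else 0 with hg
    have hgk : ∀ k : S, g (k : ℕ) = v k := fun k => by simp [hg, k.2]
    have key : (fun ω => g + ω) ⁻¹' (π ⁻¹' {v}) = π ⁻¹' {0} := by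
      ext ω
      simp only [Set.mem_preimage, Set.mem_singleton_iff, funext_iff, hπdef, Pi.add_apply,
        Pi.zero_apply]
      refine forall_congr' fun k => ?_
      rw [hgk k, add_eq_left]
    rw [← measure_preimage_add bcHaar g (π ⁻¹' {v}), key]
  have hcardne : ((Fintype.card (∀ k : S, Fin (2 ^ (k : ℕ))) : ℝ≥0∞)) ≠ 0 := by
    exact_mod_cast Nat.cast_ne_zero.2 Fintype.card_ne_zero
  have hcardnt : ((Fintype.card (∀ k : S, Fin (2 ^ (k : ℕ))) : ℝ≥0∞)) ≠ ⊤ :=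
    ENNReal.natCast_ne_top _
  have hsum : ∀ (F : Finset (∀ k : S, Fin (2 ^ (k : ℕ)))),
      ν (↑F : Set _) = (F.card : ℝ≥0∞) * ν {0} := by
    intro F
    have hU : (↑F : Set _) = ⋃ v ∈ F, ({v} : Set _) := by ext x; simp
    rw [hU, measure_biUnion_finset ?_ (fun v _ => measurableSet_singleton v)]
    · simp only [hsingle]
      rw [Finset.sum_const, nsmul_eq_mul]
    · intro i _ j _ hij
      simp [Function.onFun, Set.disjoint_singleton_left, hij]
  have hone : ν Set.univ = 1 := measure_univ
  have hcount : (Fintype.card (∀ k : S, Fin (2 ^ (k : ℕ))) : ℝ≥0∞) * ν {0} = 1 := by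
    have h2 := hsum Finset.univ
    rw [Finset.coe_univ, hone, Finset.card_univ] at h2
    exact h2.symm
  have hzero : ν {0} = ((Fintype.card (∀ k : S, Fin (2 ^ (k : ℕ))) : ℝ≥0∞))⁻¹ := by
    calc ν {0}
        = (((Fintype.card (∀ k : S, Fin (2 ^ (k : ℕ))) : ℝ≥0∞))⁻¹ *
            (Fintype.card (∀ k : S, Fin (2 ^ (k : ℕ))) : ℝ≥0∞)) * ν {0} := by
          rw [ENNReal.inv_mul_cancel hcardne hcardnt, one_mul]
      _ = ((Fintype.card (∀ k : S, Fin (2 ^ (k : ℕ))) : ℝ≥0∞))⁻¹ *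
            ((Fintype.card (∀ k : S, Fin (2 ^ (k : ℕ))) : ℝ≥0∞) * ν {0}) := by
          rw [mul_assoc]
      _ = ((Fintype.card (∀ k : S, Fin (2 ^ (k : ℕ))) : ℝ≥0∞))⁻¹ := by
          rw [hcount, mul_one]
  set F : Finset (∀ k : S, Fin (2 ^ (k : ℕ))) := Fintype.piFinset (fun k : S => A k) with hF
  have hpre : {ω : BCG | ∀ k ∈ S, ω k ∈ A k} = π ⁻¹' (↑F : Set _) := by
    ext ω
    simp only [Set.mem_setOf_eq, Set.mem_preimage, Finset.coe_mem, hF, Fintype.mem_piFinset,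
      Finset.mem_coe, hπdef]
    constructor
    · intro h k; exact h k k.2
    · intro h k hk; exact h ⟨k, hk⟩
  have hFmeas : MeasurableSet (↑F : Set (∀ k : S, Fin (2 ^ (k : ℕ)))) :=
    (Set.toFinite _).measurableSet
  have hcardF : F.card = ∏ k : S, (A k).card := by
    simp [hF, Fintype.card_piFinset]
  have hcardPi : Fintype.card (∀ k : S, Fin (2 ^ (k : ℕ))) = ∏ k : S, 2 ^ (k : ℕ) := by
    simp [Fintype.card_pi]
  calc bcHaar {ω : BCG | ∀ k ∈ S, ω k ∈ A k}
      = ν (↑F : Set _) := by rw [hpre, hν, Measure.map_apply hπ hFmeas]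
    _ = (F.card : ℝ≥0∞) * ν {0} := hsum F
    _ = (∏ k : S, ((A k).card : ℝ≥0∞)) * (∏ k : S, ((2 : ℝ≥0∞) ^ (k : ℕ)))⁻¹ := by
        rw [hzero, hcardF, hcardPi]
        push_cast
        ring_nf
    _ = (∏ k : S, ((A k).card : ℝ≥0∞)) * (∏ k : S, ((2 : ℝ≥0∞) ^ (k : ℕ))⁻¹) := by
        rw [ENNReal.prod_inv_distrib]
        intro i _ j _ _
        exact Or.inl (by positivity)
    _ = ∏ k : S, (((A k).card : ℝ≥0∞) * ((2 : ℝ≥0∞) ^ (k : ℕ))⁻¹) := by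
        rw [← Finset.prod_mul_distrib]
    _ = ∏ k ∈ S, (((A k).card : ℝ≥0∞) * ((2 ^ k : ℝ≥0∞))⁻¹) := by
        rw [← Finset.prod_coe_sort S (fun k => (((A k).card : ℝ≥0∞) * ((2 ^ k : ℝ≥0∞))⁻¹))]

end BCAux

open MeasureTheory
open scoped ENNReal NNReal

theorem stmt15 (U : Ultrafilter ℕ) (hfree : ∀ A : Set ℕ, A.Finite → A ∉ U)
    (hBC : ∀ (Ω : Type) (_ : MeasurableSpace Ω) (lam : Measure Ω),
      IsProbabilityMeasure lam →
      ∀ P : ℕ → Set Ω, (∀ k, MeasurableSet (P k)) →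
        Filter.Tendsto (fun k => (lam (P k)).toReal) (U : Filter ℕ) (nhds 0) →
        ∃ X ∈ U, lam (⋂ k ∈ X, ⋃ i ∈ X, ⋃ (_ : k < i), P i) = 0) :
    ∀ a : ℕ → ℝ, (∀ n, a n ∈ Set.Icc (0 : ℝ) 1) →
      Filter.Tendsto a (U : Filter ℕ) (nhds 0) →
      ∃ X ∈ U, Summable (Set.indicator X a) := by
  classical
  intro a ha haU
  by_contra hcon
  push_neg at hcon
  -- U extends atTop
  have hUatTop : (U : Filter ℕ) ≤ Filter.atTop := by
    rw [← Nat.cofinite_eq_atTop]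
    intro s hs
    have h1 : sᶜ ∉ U := hfree sᶜ hs
    exact (Ultrafilter.compl_notMem_iff).1 h1
  -- dyadic approximations
  set c : ℕ → ℕ := fun k => ⌈a k * 2 ^ k⌉₊ with hcdef
  have h2pos : ∀ k : ℕ, (0 : ℝ) < 2 ^ k := fun k => by positivity
  have hc_le : ∀ k, c k ≤ 2 ^ k := by
    intro k
    refine Nat.ceil_le.2 ?_
    push_cast
    nlinarith [(ha k).1, (ha k).2, h2pos k]
  have h_le_c : ∀ k, a k * 2 ^ k ≤ c k := fun k => Nat.le_ceil _
  have hc_lt : ∀ k, (c k : ℝ) ≤ a k * 2 ^ k + 1 := by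
    intro k
    have h0 : (0 : ℝ) ≤ a k * 2 ^ k := by nlinarith [(ha k).1, h2pos k]
    exact le_of_lt (Nat.ceil_lt_add_one h0)
  set A : ∀ k : ℕ, Finset (Fin (2 ^ k)) := fun k =>
    Finset.attachFin (Finset.range (c k))
      (fun m hm => lt_of_lt_of_le (Finset.mem_range.1 hm) (hc_le k)) with hAdef
  have hAcard : ∀ k, (A k).card = c k := by
    intro k; simp [hAdef, Finset.card_attachFin]
  set P : ℕ → Set BCG := fun k => {ω | ω k ∈ A k} with hPdef
  have hPmeas : ∀ k, MeasurableSet (P k) := by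
    intro k
    have : P k = (fun ω : BCG => ω k) ⁻¹' (↑(A k) : Set (Fin (2 ^ k))) := rfl
    rw [this]
    exact (measurable_pi_apply k) ((Set.toFinite _).measurableSet)
  have hPval : ∀ S : Finset ℕ,
      bcHaar (⋂ k ∈ S, P k) = ∏ k ∈ S, ((c k : ℝ≥0∞) * ((2 ^ k : ℝ≥0∞))⁻¹) := by
    intro S
    have hset : (⋂ k ∈ S, P k) = {ω : BCG | ∀ k ∈ S, ω k ∈ A k} := by
      ext ω; simp [hPdef]
    rw [hset, bc_master]
    exact Finset.prod_congr rfl fun k _ => by rw [hAcard]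
  have hPk : ∀ k, bcHaar (P k) = (c k : ℝ≥0∞) * ((2 ^ k : ℝ≥0∞))⁻¹ := by
    intro k
    have := hPval {k}
    simpa using this
  -- toReal value
  have htoReal : ∀ k, (bcHaar (P k)).toReal = (c k : ℝ) / 2 ^ k := by
    intro k
    rw [hPk, ENNReal.toReal_mul, ENNReal.toReal_inv, div_eq_mul_inv]
    norm_num [ENNReal.toReal_pow]
  -- tendsto along U
  have htend : Filter.Tendsto (fun k => (bcHaar (P k)).toReal) (U : Filter ℕ) (nhds 0) := by
    have hup : ∀ k, (bcHaar (P k)).toReal ≤ a k + (1 / 2 : ℝ) ^ k := by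
      intro k
      rw [htoReal, div_le_iff₀ (h2pos k)]
      have h12 : ((1 : ℝ) / 2) ^ k * 2 ^ k = 1 := by
        rw [← mul_pow]; norm_num
      nlinarith [hc_lt k]
    have hlo : ∀ k, (0 : ℝ) ≤ (bcHaar (P k)).toReal := fun k => ENNReal.toReal_nonneg
    have hupperT : Filter.Tendsto (fun k => a k + (1 / 2 : ℝ) ^ k) (U : Filter ℕ) (nhds 0) := by
      have h2 : Filter.Tendsto (fun k : ℕ => (1 / 2 : ℝ) ^ k) (U : Filter ℕ) (nhds 0) :=
        (tendsto_pow_atTop_nhds_zero_of_lt_one (by norm_num) (by norm_num)).mono_left hUatTop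
      simpa using haU.add h2
    exact tendsto_of_tendsto_of_tendsto_of_le_of_le tendsto_const_nhds hupperT hlo hup
  obtain ⟨X, hXU, hX0⟩ := hBC BCG _ bcHaar inferInstance P hPmeas htend
  -- X is infinite
  have hXinf : (setOf (· ∈ X)).Infinite := by
    change X.Infinite
    intro hfin
    refine hcon X hXU ?_
    refine summable_of_ne_finset_zero (s := hfin.toFinset) ?_
    intro m hm
    exact Set.indicator_of_notMem (by simpa using hm) a
  set e : ℕ → ℕ := Nat.nth (· ∈ X) with hedef
  have hmono : StrictMono e := Nat.nth_strictMono hXinf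
  have hmem : ∀ n, e n ∈ X := Nat.nth_mem_of_infinite hXinf
  have hrange : Set.range e = X := by
    rw [hedef, Nat.range_nth_of_infinite hXinf]; exact Set.setOf_mem_eq
  -- independence of the subsequence
  have hindep : ProbabilityTheory.iIndepSet (fun n => P (e n)) bcHaar := by
    rw [ProbabilityTheory.iIndepSet_iff_meas_biInter (fun n => hPmeas (e n))]
    intro t
    have himg : (⋂ i ∈ t, P (e i)) = ⋂ k ∈ t.image e, P k := by
      ext ω
      simp only [Set.mem_iInter, Finset.mem_image]
      constructor
      · rintro h k ⟨i, hi, rfl⟩; exact h i hi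
      · intro h i hi; exact h (e i) ⟨i, hi, rfl⟩
    rw [himg, hPval, Finset.prod_image (fun i _ j _ h => hmono.injective h)]
    exact Finset.prod_congr rfl fun i _ => (hPk (e i)).symm
  -- divergence of the series
  have hofle : ∀ m, ENNReal.ofReal (a m) ≤ bcHaar (P m) := by
    intro m
    rw [ENNReal.ofReal_le_iff_le_toReal (measure_ne_top bcHaar (P m)), htoReal,
      le_div_iff₀ (h2pos m)]
    exact h_le_c m
  have hdiv : ∑' n, bcHaar (P (e n)) = ⊤ := by
    by_contra hne
    have hne' : ∑' n, ENNReal.ofReal (a (e n)) ≠ ⊤ :=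
      ne_top_of_le_ne_top hne (ENNReal.tsum_le_tsum fun n => hofle (e n))
    have hsumNN : Summable fun n => (a (e n)).toNNReal := by
      refine ENNReal.tsum_coe_ne_top_iff_summable.1 ?_
      simpa [ENNReal.ofReal] using hne'
    have hsumR : Summable fun n => a (e n) := by
      have h1 : Summable fun n => ((a (e n)).toNNReal : ℝ) := NNReal.summable_coe.2 hsumNN
      refine h1.congr fun n => Real.coe_toNNReal _ (ha (e n)).1
    have hsumInd : Summable (Set.indicator X a) := by
      refine (Function.Injective.summable_iff hmono.injective ?_).1 ?_
      · intro m hm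
        rw [hrange] at hm
        exact Set.indicator_of_notMem hm a
      · refine hsumR.congr fun n => ?_
        exact (Set.indicator_of_mem (hmem n) a).symm
    exact hcon X hXU hsumInd
  -- second Borel–Cantelli
  have hone := ProbabilityTheory.measure_limsup_eq_one (μ := bcHaar)
    (fun n => hPmeas (e n)) hindep hdiv
  have hsub : Filter.limsup (fun n => P (e n)) Filter.atTop ⊆
      ⋂ k ∈ X, ⋃ i ∈ X, ⋃ (_ : k < i), P i := by
    intro ω hω
    rw [Filter.mem_limsup_iff_frequently_mem] at hω
    simp only [Set.mem_iInter, Set.mem_iUnion]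
    intro k hk
    obtain ⟨n, hωn, hn⟩ := (hω.and_eventually (Filter.eventually_ge_atTop (k + 1))).exists
    refine ⟨e n, hmem n, ?_, hωn⟩
    calc k < k + 1 := Nat.lt_succ_self k
      _ ≤ n := hn
      _ ≤ e n := hmono.le_apply
  have habs : (1 : ℝ≥0∞) ≤ 0 := by
    calc (1 : ℝ≥0∞) = bcHaar (Filter.limsup (fun n => P (e n)) Filter.atTop) := hone.symm
      _ ≤ bcHaar (⋂ k ∈ X, ⋃ i ∈ X, ⋃ (_ : k < i), P i) := measure_mono hsub
      _ = 0 := hX0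
  simp at habs
end

section
/- Let U be a P-point ultrafilter on ω. For every sequence (r_n) of reals decreasing to a limit r and every array (a_{n,k})_{n,k∈ω} of reals in [0,1] that is pointwise decreasing in n (a_{n+1,k} ≤ a_{n,k}) and satisfies lim_{k→U} a_{n,k} = r_n for each n, there exists a function k ↦ n_k with n_k → ∞ such that the diagonal sequence b_k = a_{n_k, k} satisfies lim_{k→U} b_k = r and for each fixed n, b_k ≤ a_{n,k} for all but finitely many k. -/
theorem stmt18 (U : Ultrafilter ℕ) (hfree : ∀ A : Set ℕ, A.Finite → A ∉ U)
    (hpp : ∀ A : ℕ → Set ℕ, (∀ n, A n ∈ U) → ∃ B ∈ U, ∀ n, (B \ A n).Finite)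
    (r : ℕ → ℝ) (rlim : ℝ) (hrmono : Antitone r)
    (hrlim : Filter.Tendsto r Filter.atTop (nhds rlim))
    (a : ℕ → ℕ → ℝ) (ha01 : ∀ n k, a n k ∈ Set.Icc (0 : ℝ) 1)
    (hamono : ∀ n k, a (n + 1) k ≤ a n k)
    (haU : ∀ n, Filter.Tendsto (fun k => a n k) (U : Filter ℕ) (nhds (r n))) :
    ∃ nk : ℕ → ℕ, Filter.Tendsto nk Filter.atTop Filter.atTop ∧
      Filter.Tendsto (fun k => a (nk k) k) (U : Filter ℕ) (nhds rlim) ∧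
      ∀ n, ∀ᶠ k in Filter.atTop, a (nk k) k ≤ a n k := by
  classical
  -- U extends the cofinite = atTop filter
  have hUat : (U : Filter ℕ) ≤ Filter.atTop := by
    rw [← Nat.cofinite_eq_atTop]
    intro s hs
    have h1 : sᶜ ∉ U := hfree _ hs
    exact Ultrafilter.compl_notMem_iff.1 h1
  -- a is antitone in the first variable
  have haanti : ∀ k, Antitone fun n => a n k := fun k =>
    antitone_nat_of_succ_le fun n => hamono n k
  set A : ℕ → Set ℕ := fun n => {k | |a n k - r n| < 1 / (n + 1)} with hAdef
  have hAU : ∀ n, A n ∈ U := by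
    intro n
    have hpos : (0 : ℝ) < 1 / (n + 1) := by positivity
    have := Metric.tendsto_nhds.1 (haU n) _ hpos
    exact (by simpa [Real.dist_eq] using this : ∀ᶠ x in (U : Filter ℕ), |a n x - r n| < 1 / ((n : ℝ) + 1))
  obtain ⟨B, hBU, hBfin⟩ := hpp A hAU
  set P : ℕ → ℕ → Prop := fun k n => ∀ m ≤ n, k ∈ A m ∪ Bᶜ with hPdef
  set nk : ℕ → ℕ := fun k => Nat.findGreatest (P k) k with hnkdef
  have htend : Filter.Tendsto nk Filter.atTop Filter.atTop := by
    rw [Filter.tendsto_atTop]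
    intro N
    have hev : ∀ m : Fin (N + 1), ∀ᶠ k in Filter.atTop, k ∉ B \ A m := by
      intro m
      have := Set.Finite.eventually_cofinite_notMem (hBfin m)
      rwa [Nat.cofinite_eq_atTop] at this
    have hall : ∀ᶠ k in Filter.atTop, ∀ m : Fin (N + 1), k ∉ B \ A m :=
      Filter.eventually_all.2 hev
    filter_upwards [hall, Filter.eventually_ge_atTop N] with k h1 h2
    refine Nat.le_findGreatest h2 ?_
    intro m hm
    by_cases hkB : k ∈ B
    · have := h1 ⟨m, by omega⟩
      simp only [Set.mem_diff, not_and, not_not] at this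
      exact Set.mem_union_left _ (this hkB)
    · exact Set.mem_union_right _ hkB
  refine ⟨nk, htend, ?_, ?_⟩
  · rw [Metric.tendsto_nhds]
    intro ε hε
    obtain ⟨N1, hN1⟩ := (Metric.tendsto_atTop.1 hrlim) (ε / 2) (by linarith)
    obtain ⟨N2, hN2⟩ := exists_nat_one_div_lt (show (0 : ℝ) < ε / 2 by linarith)
    set N := max (max N1 N2) 1 with hNdef
    have hNev : ∀ᶠ k in Filter.atTop, N ≤ nk k := htend.eventually_ge_atTop N
    have hNU : {k | N ≤ nk k} ∈ U := hUat hNev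
    have hBU' : ∀ᶠ k in (U : Filter ℕ), k ∈ B := hBU
    filter_upwards [hBU', hNU] with k hkB hkN
    have h0 : 0 < nk k := lt_of_lt_of_le (by omega) hkN
    have hspec : P k (nk k) := Nat.findGreatest_of_ne_zero rfl (by omega)
    have hkA : k ∈ A (nk k) := by
      have := hspec (nk k) le_rfl
      rcases this with h | h
      · exact h
      · exact absurd hkB h
    have h1 : |a (nk k) k - r (nk k)| < 1 / (nk k + 1) := hkA
    have h2 : dist (r (nk k)) rlim < ε / 2 :=
      hN1 (nk k) (le_trans (le_trans (le_max_left N1 N2) (le_max_left _ 1)) hkN)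
    have h3 : (1 : ℝ) / (nk k + 1) ≤ 1 / (N2 + 1) := by
      have : (N2 : ℝ) ≤ nk k := by
        exact_mod_cast le_trans (le_trans (le_max_right N1 N2) (le_max_left _ 1)) hkN
      apply one_div_le_one_div_of_le (by positivity)
      linarith
    have h4 : dist (a (nk k) k) rlim ≤ dist (a (nk k) k) (r (nk k)) + dist (r (nk k)) rlim :=
      dist_triangle _ _ _
    rw [Real.dist_eq] at h4 ⊢
    calc |a (nk k) k - rlim| ≤ |a (nk k) k - r (nk k)| + dist (r (nk k)) rlim := by
          simpa [Real.dist_eq] using h4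
      _ < 1 / (nk k + 1) + ε / 2 := by linarith
      _ ≤ 1 / (N2 + 1) + ε / 2 := by linarith
      _ < ε / 2 + ε / 2 := by linarith
      _ = ε := by ring
  · intro n
    filter_upwards [htend.eventually_ge_atTop n] with k hk
    exact haanti k hk
end
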